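/- arXiv:2312.07421 — 8 statements merged into one kernel-verified Lean document; each statement's English description precedes it below -/
import Mathlib

section
/- Let π : Fin N → Fin n be a surjective map encoding a partition with matrices L and L̄, and let A ∈ ℝ^{N×N}. Then the partition is a control equivalence for A (i.e., L·A = L·A·L̄·L) if and only if for every block index i ∈ Fin n and all nodes j, j' ∈ Fin N with π j = π j', the block column sums agree: Σ_{r : π r = i} A r j = Σ_{r : π r = i} A r j'. -/
open Matrix

/-- Aggregation matrix of the partition encoded by `π`. -/
noncomputable def aggL {N n : ℕ} (π : Fin N → Fin n) : Matrix (Fin n) (Fin N) ℝ :=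
  fun i j => if π j = i then 1 else 0

/-- Averaging matrix of the partition encoded by `π`. -/
noncomputable def avgL {N n : ℕ} (π : Fin N → Fin n) : Matrix (Fin N) (Fin n) ℝ :=
  fun j i => if π j = i then
    (1 : ℝ) / (Finset.univ.filter (fun j' : Fin N => π j' = i)).card else 0

lemma aggL_mul_apply {N n : ℕ} (π : Fin N → Fin n) (A : Matrix (Fin N) (Fin N) ℝ)
    (i : Fin n) (j : Fin N) :
    (aggL π * A) i j = ∑ r ∈ Finset.univ.filter (fun r : Fin N => π r = i), A r j := by
  rw [mul_apply, Finset.sum_filter]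
  simp [aggL, ite_mul]

lemma rhs_apply {N n : ℕ} (π : Fin N → Fin n) (A : Matrix (Fin N) (Fin N) ℝ)
    (i : Fin n) (j : Fin N) :
    (aggL π * A * avgL π * aggL π) i j =
      ((1 : ℝ) / (Finset.univ.filter (fun j' : Fin N => π j' = π j)).card) *
        ∑ j' ∈ Finset.univ.filter (fun j' : Fin N => π j' = π j), (aggL π * A) i j' := by
  rw [mul_apply]
  have h1 : ∀ k, (aggL π * A * avgL π) i k * aggL π k j
      = if π j = k then (aggL π * A * avgL π) i k else 0 := by
    intro k; simp [aggL, mul_ite]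
  simp only [h1, Finset.sum_ite_eq, Finset.mem_univ, if_true]
  rw [mul_apply, Finset.mul_sum]
  rw [Finset.sum_filter]
  congr 1
  ext j'
  simp only [avgL]
  by_cases h : π j' = π j <;> simp [h, mul_comm]

/-- The partition encoded by `π` is a control equivalence for `A` iff, for every block
`i` and all nodes `j, j'` in a common block, the block column sums agree. -/
theorem controlEquivalence_iff_blockColumnSums {N n : ℕ} (π : Fin N → Fin n)
    (hπ : Function.Surjective π) (A : Matrix (Fin N) (Fin N) ℝ) :
    aggL π * A = aggL π * A * avgL π * aggL π ↔
      ∀ (i : Fin n) (j j' : Fin N), π j = π j' →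
        ∑ r ∈ Finset.univ.filter (fun r : Fin N => π r = i), A r j =
          ∑ r ∈ Finset.univ.filter (fun r : Fin N => π r = i), A r j' := by
  constructor
  · intro h i j j' hjj'
    rw [← aggL_mul_apply, ← aggL_mul_apply, h, rhs_apply, rhs_apply, hjj']
  · intro h
    ext i j
    rw [rhs_apply, aggL_mul_apply]
    have hc : ∀ j' ∈ Finset.univ.filter (fun j' : Fin N => π j' = π j),
        (aggL π * A) i j' = ∑ r ∈ Finset.univ.filter (fun r : Fin N => π r = i), A r j := by
      intro j' hj'
      rw [aggL_mul_apply]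
      exact h i j' j (Finset.mem_filter.mp hj').2
    rw [Finset.sum_congr rfl hc, Finset.sum_const, nsmul_eq_mul]
    have hne : ((Finset.univ.filter (fun j' : Fin N => π j' = π j)).card : ℝ) ≠ 0 := by
      have : j ∈ Finset.univ.filter (fun j' : Fin N => π j' = π j) := by simp
      have := Finset.card_pos.mpr ⟨j, this⟩
      exact_mod_cast this.ne'
    field_simp
end

section
/- (Theorem 1, part 1.) Let the partition encoded by π with matrices L, L̄ be a control equivalence for A ∈ ℝ^{N×N}, let B have unit-vector columns given by an injective driver map d, and let F, R be final and running costs that are constant on the partition, with induced reduced costs F̂, R̂. Then for every admissible pair (u,x) from x0 ∈ ℝ^N, the pair (û, ẑ) with û(t) = (L·B)·u(t) and ẑ(t) = L·x(t) is a reduced admissible pair from L·x0, and J_u(x0,T) = Ĵ_û(L·x0,T) for every T ≥ 0. -/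
open Matrix MeasureTheory

/-- Theorem 1, part 1: given a control equivalence and costs constant on the partition,
every admissible pair `(u, x)` from `x0` is lumped to a reduced admissible pair
`(û, ẑ) = ((L·B)·u, L·x)` from `L·x0` with the same cost at every horizon `T ≥ 0`. -/
theorem optimality_preservation_part1 {N n K : ℕ} (π : Fin N → Fin n)
    (hπ : Function.Surjective π) (A : Matrix (Fin N) (Fin N) ℝ)
    (hCE : aggL π * A = aggL π * A * avgL π * aggL π)
    (d : Fin K → Fin N) (hd : Function.Injective d)
    (B : Matrix (Fin N) (Fin K) ℝ)
    (hB : ∀ (j : Fin N) (l : Fin K), B j l = if j = d l then 1 else 0)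
    (m M : Fin K → ℝ) (hmM : ∀ l, m l ≤ M l)
    (F : (Fin N → ℝ) → ℝ) (R : ℝ → (Fin N → ℝ) → (Fin K → ℝ) → ℝ)
    (Fhat : (Fin n → ℝ) → ℝ) (Rhat : ℝ → (Fin n → ℝ) → (Fin n → ℝ) → ℝ)
    (hFhat : ∀ x : Fin N → ℝ, F x = Fhat ((aggL π).mulVec x))
    (hRhat : ∀ (t : ℝ) (x : Fin N → ℝ) (v : Fin K → ℝ),
      R t x v = Rhat t ((aggL π).mulVec x) ((aggL π * B).mulVec v))
    (x0 : Fin N → ℝ) (u : ℝ → Fin K → ℝ) (x : ℝ → Fin N → ℝ)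
    (hu : Measurable u) (hbox : ∀ t : ℝ, ∀ l : Fin K, m l ≤ u t l ∧ u t l ≤ M l)
    (hx : Continuous x)
    (hxeq : ∀ t : ℝ, 0 ≤ t →
      x t = x0 + ∫ s in (0:ℝ)..t, (A.mulVec (x s) + B.mulVec (u s))) :
    -- the macro-input is measurable
    Measurable (fun t : ℝ => (aggL π * B).mulVec (u t)) ∧
    -- the macro-input lies in the reduced box `[m̂;M̂]`
    (∀ t : ℝ, ∀ i : Fin n,
      (∑ l ∈ Finset.univ.filter (fun l : Fin K => π (d l) = i), m l) ≤
          (aggL π * B).mulVec (u t) i ∧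
        (aggL π * B).mulVec (u t) i ≤
          ∑ l ∈ Finset.univ.filter (fun l : Fin K => π (d l) = i), M l) ∧
    -- the lumped trajectory is continuous
    Continuous (fun t : ℝ => (aggL π).mulVec (x t)) ∧
    -- the lumped trajectory solves the reduced integral equation from `L·x0`
    (∀ t : ℝ, 0 ≤ t →
      (aggL π).mulVec (x t) = (aggL π).mulVec x0 +
        ∫ s in (0:ℝ)..t,
          ((aggL π * A * avgL π).mulVec ((aggL π).mulVec (x s)) +
            (aggL π * B).mulVec (u s))) ∧
    -- the cost is preserved at every horizon
    (∀ T : ℝ, 0 ≤ T →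
      F (x T) + (∫ t in (0:ℝ)..T, R t (x t) (u t)) =
        Fhat ((aggL π).mulVec (x T)) +
          ∫ t in (0:ℝ)..T,
            Rhat t ((aggL π).mulVec (x t)) ((aggL π * B).mulVec (u t))) := by
    -- entries of L·B
  have hLB : ∀ (i : Fin n) (l : Fin K),
      (aggL π * B) i l = if π (d l) = i then (1:ℝ) else 0 := by
    intro i l
    simp [Matrix.mul_apply, aggL, hB, mul_ite, ite_mul]
  have hLBv : ∀ (v : Fin K → ℝ) (i : Fin n),
      (aggL π * B).mulVec v i
        = ∑ l ∈ Finset.univ.filter (fun l : Fin K => π (d l) = i), v l := by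
    intro v i
    simp only [Matrix.mulVec, dotProduct, hLB, ite_mul, one_mul, zero_mul,
      Finset.sum_filter]
  -- continuous linear map given by L
  have clmL : (Fin N → ℝ) →L[ℝ] (Fin n → ℝ) :=
    LinearMap.toContinuousLinearMap (Matrix.mulVecLin (aggL π))
  refine ⟨?_, ?_, ?_, ?_, ?_⟩
  · -- measurability
    refine measurable_pi_iff.mpr fun i => ?_
    have : (fun t : ℝ => (aggL π * B).mulVec (u t) i)
        = fun t => ∑ l : Fin K, (aggL π * B) i l * u t l := by
      funext t; rfl
    rw [this]
    exact Finset.measurable_sum _ fun l _ =>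
      (measurable_const.mul ((measurable_pi_apply l).comp hu))
  · -- box
    intro t i
    rw [hLBv]
    exact ⟨Finset.sum_le_sum fun l _ => (hbox t l).1,
      Finset.sum_le_sum fun l _ => (hbox t l).2⟩
  · -- continuity
    exact (LinearMap.toContinuousLinearMap (Matrix.mulVecLin (aggL π))).continuous.comp hx
  · -- integral equation
    intro t ht
    set g : ℝ → Fin N → ℝ := fun s => B.mulVec (u s) with hg
    have hgmeas : Measurable g := by
      refine measurable_pi_iff.mpr fun j => ?_
      have : (fun s : ℝ => g s j) = fun s => ∑ l : Fin K, B j l * u s l := by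
        funext s; rfl
      rw [this]
      exact Finset.measurable_sum _ fun l _ =>
        (measurable_const.mul ((measurable_pi_apply l).comp hu))
    set C : ℝ := ∑ l : Fin K, (|m l| + |M l|) with hC
    have hCnn : 0 ≤ C := Finset.sum_nonneg fun l _ => by positivity
    have hgbd : ∀ s, ‖g s‖ ≤ C := by
      intro s
      rw [pi_norm_le_iff_of_nonneg hCnn]
      intro j
      rw [Real.norm_eq_abs]
      calc |g s j| = |∑ l : Fin K, B j l * u s l| := rfl
        _ ≤ ∑ l : Fin K, |B j l * u s l| := Finset.abs_sum_le_sum_abs _ _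
        _ ≤ C := by
          refine Finset.sum_le_sum fun l _ => ?_
          rw [abs_mul]
          have h1 : |B j l| ≤ 1 := by rw [hB]; split <;> simp
          have h2 : |u s l| ≤ |m l| + |M l| := by
            rcases hbox s l with ⟨hl, hr⟩
            rw [abs_le]
            constructor
            · have := neg_abs_le (m l); have := abs_nonneg (M l); linarith
            · have := le_abs_self (M l); have := abs_nonneg (m l); linarith
          calc |B j l| * |u s l| ≤ 1 * (|m l| + |M l|) :=
                mul_le_mul h1 h2 (abs_nonneg _) one_pos.le
            _ = |m l| + |M l| := one_mul _
    have hgint : IntervalIntegrable g volume 0 t := by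
      rw [intervalIntegrable_iff_integrableOn_Ioc_of_le ht]
      exact Integrable.mono' (integrableOn_const (C := C) measure_Ioc_lt_top.ne)
        hgmeas.aestronglyMeasurable (ae_of_all _ hgbd)
    have hacont : Continuous fun s => A.mulVec (x s) :=
      (LinearMap.toContinuousLinearMap (Matrix.mulVecLin A)).continuous.comp hx
    have hfint : IntervalIntegrable (fun s => A.mulVec (x s) + B.mulVec (u s)) volume 0 t :=
      (hacont.intervalIntegrable 0 t).add hgint
    have key := (LinearMap.toContinuousLinearMap
      (Matrix.mulVecLin (aggL π))).intervalIntegral_comp_comm hfint (a := 0) (b := t)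
    rw [hxeq t ht, Matrix.mulVec_add]
    congr 1
    rw [show (aggL π).mulVec (∫ s in (0:ℝ)..t, (A.mulVec (x s) + B.mulVec (u s)))
        = (LinearMap.toContinuousLinearMap (Matrix.mulVecLin (aggL π)))
          (∫ s in (0:ℝ)..t, (A.mulVec (x s) + B.mulVec (u s))) from rfl, ← key]
    apply intervalIntegral.integral_congr
    intro s _
    show (aggL π).mulVec (A.mulVec (x s) + B.mulVec (u s)) = _
    simp only [Matrix.mulVec_add, Matrix.mulVec_mulVec]
    conv_lhs => rw [hCE]
  · -- cost
    intro T hT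
    simp only [hFhat, hRhat]
end

section
/- (Trajectory matching under disaggregated controls.) Let the partition encoded by π with matrices L, L̄ be a control equivalence for A ∈ ℝ^{N×N} (L·A = L·A·L̄·L), let B ∈ ℝ^{N×K}, and set Â = L·A·L̄. Let u : ℝ → ℝ^K be measurable and bounded, let x : ℝ → ℝ^N be continuous with x(t) = x0 + ∫₀ᵗ (A·x(s) + B·u(s)) ds for all t ≥ 0, and let ẑ : ℝ → ℝ^n be continuous with ẑ(t) = L·x0 + ∫₀ᵗ (Â·ẑ(s) + û(s)) ds for all t ≥ 0, where û : ℝ → ℝ^n is measurable with û(t) = (L·B)·u(t) for all t. Then ẑ(t) = L·x(t) for all t ≥ 0. -/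
open Matrix MeasureTheory Set intervalIntegral

/-- Auxiliary: a matrix applied to a measurable bounded function is interval integrable. -/
lemma mulVec_intervalIntegrable {m k : ℕ} (M : Matrix (Fin m) (Fin k) ℝ)
    (v : ℝ → Fin k → ℝ) (hv : Measurable v) (C : ℝ) (hC : ∀ t, ‖v t‖ ≤ C) (a b : ℝ) :
    IntervalIntegrable (fun s => M.mulVec (v s)) volume a b := by
  let e : (Fin k → ℝ) →L[ℝ] (Fin m → ℝ) := LinearMap.toContinuousLinearMap M.mulVecLin
  have he : ∀ w, e w = M.mulVec w := fun w => rfl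
  have hm : Measurable fun s => M.mulVec (v s) := e.continuous.measurable.comp hv
  rw [intervalIntegrable_iff]
  haveI : IsFiniteMeasure (volume.restrict (uIoc a b)) := by
    constructor
    rw [Measure.restrict_apply_univ]
    exact measure_Ioc_lt_top
  refine (integrable_const (‖e‖ * C)).mono' hm.aestronglyMeasurable ?_
  refine ae_of_all _ fun s => ?_
  calc ‖M.mulVec (v s)‖ = ‖e (v s)‖ := by rw [he]
    _ ≤ ‖e‖ * ‖v s‖ := e.le_opNorm _
    _ ≤ ‖e‖ * C := mul_le_mul_of_nonneg_left (hC s) (norm_nonneg _)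

/-- Trajectory matching under disaggregated controls: if the partition is a control
equivalence for `A`, then any solution `ẑ` of the reduced integral equation driven by
the aggregated input `û = (L·B)·u`, starting from `L·x0`, coincides with the lumped
original trajectory `L·x`. -/
theorem trajectory_matching {N n K : ℕ} (π : Fin N → Fin n)
    (hπ : Function.Surjective π) (A : Matrix (Fin N) (Fin N) ℝ)
    (hCE : aggL π * A = aggL π * A * avgL π * aggL π)
    (B : Matrix (Fin N) (Fin K) ℝ)
    (u : ℝ → Fin K → ℝ) (hu : Measurable u) (hubd : ∃ C : ℝ, ∀ t : ℝ, ‖u t‖ ≤ C)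
    (x0 : Fin N → ℝ) (x : ℝ → Fin N → ℝ) (hx : Continuous x)
    (hxeq : ∀ t : ℝ, 0 ≤ t →
      x t = x0 + ∫ s in (0:ℝ)..t, (A.mulVec (x s) + B.mulVec (u s)))
    (uhat : ℝ → Fin n → ℝ) (huhat : Measurable uhat)
    (huhat_eq : ∀ t : ℝ, uhat t = (aggL π * B).mulVec (u t))
    (zhat : ℝ → Fin n → ℝ) (hzhat : Continuous zhat)
    (hzhateq : ∀ t : ℝ, 0 ≤ t →
      zhat t = (aggL π).mulVec x0 +
        ∫ s in (0:ℝ)..t, ((aggL π * A * avgL π).mulVec (zhat s) + uhat s)) :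
    ∀ t : ℝ, 0 ≤ t → zhat t = (aggL π).mulVec (x t) := by
  obtain ⟨C, hC⟩ := hubd
  set L := aggL π with hLdef
  set Ahat := aggL π * A * avgL π with hAdef
  let eL : (Fin N → ℝ) →L[ℝ] (Fin n → ℝ) := LinearMap.toContinuousLinearMap L.mulVecLin
  let eA : (Fin n → ℝ) →L[ℝ] (Fin n → ℝ) := LinearMap.toContinuousLinearMap Ahat.mulVecLin
  have heL : ∀ v, eL v = L.mulVec v := fun v => rfl
  have heA : ∀ v, eA v = Ahat.mulVec v := fun v => rfl
  have hBuI : ∀ a b : ℝ, IntervalIntegrable (fun s => B.mulVec (u s)) volume a b :=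
    mulVec_intervalIntegrable B u hu C hC
  have huhat' : uhat = fun s => (L * B).mulVec (u s) := funext fun s => huhat_eq s
  have huhatI : ∀ a b : ℝ, IntervalIntegrable uhat volume a b := by
    rw [huhat']
    exact mulVec_intervalIntegrable (L * B) u hu C hC
  -- continuity of lumped trajectory
  have hgc : Continuous fun s => L.mulVec (x s) := eL.continuous.comp hx
  have hAzc : Continuous fun s => Ahat.mulVec (zhat s) := eA.continuous.comp hzhat
  have hAgc : Continuous fun s => Ahat.mulVec (L.mulVec (x s)) := eA.continuous.comp hgc
  -- the lumped trajectory satisfies the reduced integral equation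
  have hgeq : ∀ t : ℝ, 0 ≤ t → L.mulVec (x t) = L.mulVec x0 +
      ∫ s in (0:ℝ)..t, (Ahat.mulVec (L.mulVec (x s)) + uhat s) := by
    intro t ht
    have hI : IntervalIntegrable (fun s => A.mulVec (x s) + B.mulVec (u s)) volume 0 t :=
      (((LinearMap.toContinuousLinearMap A.mulVecLin).continuous.comp
        hx).intervalIntegrable 0 t).add (hBuI 0 t)
    rw [hxeq t ht, Matrix.mulVec_add]
    congr 1
    have hcomm : L.mulVec (∫ s in (0:ℝ)..t, (A.mulVec (x s) + B.mulVec (u s)))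
        = ∫ s in (0:ℝ)..t, eL (A.mulVec (x s) + B.mulVec (u s)) := by
      rw [← heL, ContinuousLinearMap.intervalIntegral_comp_comm eL hI]
    rw [hcomm]
    apply intervalIntegral.integral_congr
    intro s _
    show eL (A.mulVec (x s) + B.mulVec (u s)) = Ahat.mulVec (L.mulVec (x s)) + uhat s
    rw [heL, Matrix.mulVec_add, Matrix.mulVec_mulVec, Matrix.mulVec_mulVec, hCE,
      ← huhat_eq s, ← Matrix.mulVec_mulVec]
  -- difference function
  set w : ℝ → Fin n → ℝ := fun s => zhat s - L.mulVec (x s) with hwdef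
  have hwc : Continuous w := hzhat.sub hgc
  have hAwc : Continuous fun s => Ahat.mulVec (w s) := eA.continuous.comp hwc
  set W : ℝ → Fin n → ℝ := fun t => ∫ s in (0:ℝ)..t, Ahat.mulVec (w s) with hWdef
  have hweq : ∀ t : ℝ, 0 ≤ t → w t = W t := by
    intro t ht
    have h1 : IntervalIntegrable (fun s => Ahat.mulVec (zhat s) + uhat s) volume 0 t :=
      (hAzc.intervalIntegrable 0 t).add (huhatI 0 t)
    have h2 : IntervalIntegrable (fun s => Ahat.mulVec (L.mulVec (x s)) + uhat s) volume 0 t :=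
      (hAgc.intervalIntegrable 0 t).add (huhatI 0 t)
    have : w t = (∫ s in (0:ℝ)..t, (Ahat.mulVec (zhat s) + uhat s)) -
        ∫ s in (0:ℝ)..t, (Ahat.mulVec (L.mulVec (x s)) + uhat s) := by
      rw [hwdef]
      simp only
      rw [hzhateq t ht, hgeq t ht]
      abel
    rw [this, ← intervalIntegral.integral_sub h1 h2]
    apply intervalIntegral.integral_congr
    intro s _
    rw [hwdef]
    simp only
    rw [Matrix.mulVec_sub]
    abel
  -- W is a solution of the linear ODE, as is 0; uniqueness
  have hWd : ∀ t : ℝ, HasDerivAt W (Ahat.mulVec (w t)) t := by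
    intro t
    exact intervalIntegral.integral_hasDerivAt_right (hAwc.intervalIntegrable 0 t)
      (hAwc.stronglyMeasurableAtFilter _ _) hAwc.continuousAt
  intro t ht
  have hzero : W t = 0 := by
    have huniq : EqOn W (fun _ => (0 : Fin n → ℝ)) (Icc 0 t) := by
      apply ODE_solution_unique (v := fun _ y => Ahat.mulVec y) (K := ‖eA‖₊)
      · intro s
        have : LipschitzWith ‖eA‖₊ eA := eA.lipschitz
        exact this
      · exact (intervalIntegral.continuous_primitive
          (fun a b => hAwc.intervalIntegrable a b) 0).continuousOn
      · intro s hs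
        have : Ahat.mulVec (W s) = Ahat.mulVec (w s) := by rw [← hweq s hs.1]
        rw [this]
        exact (hWd s).hasDerivWithinAt
      · exact continuousOn_const
      · intro s hs
        simpa [Matrix.mulVec_zero] using (hasDerivWithinAt_const s (Ici s) (0 : Fin n → ℝ))
      · simp [hWdef]
    exact huniq ⟨ht, le_refl t⟩
  have : w t = 0 := by rw [hweq t ht, hzero]
  have := sub_eq_zero.mp this
  exact this
end

section
/- (Theorem 1, part 2.) Let the partition encoded by π with matrices L, L̄ be a control equivalence for A ∈ ℝ^{N×N}, let B have unit-vector columns given by an injective driver map d, let m ≤ M componentwise, and let F, R be costs constant on the partition with induced reduced costs F̂, R̂. Let (û, ẑ) be a reduced admissible pair from L·x0 for some x0 ∈ ℝ^N. Define u : ℝ → ℝ^K by u_l(t) = m_l + ((M_l − m_l)/(M̂_i − m̂_i))·(û_i(t) − m̂_i) with i = π(d l) when m̂_i < M̂_i, and u_l(t) = m_l otherwise. Then u is measurable, u(t) ∈ [m;M] for all t, (L·B)·u(t) = û(t) for all t, and for the trajectory x of the original system from x0 under u one has L·x(t) = ẑ(t) for all t ≥ 0 and J_u(x0,T) = Ĵ_û(L·x0,T)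 for every T ≥ 0. -/
open Matrix MeasureTheory

/-- Reduced lower bound `m̂ i = Σ_{l : π(d l) = i} m l`. -/
noncomputable def redBound {N n K : ℕ} (π : Fin N → Fin n) (d : Fin K → Fin N)
    (m : Fin K → ℝ) : Fin n → ℝ :=
  fun i => ∑ l ∈ Finset.univ.filter (fun l : Fin K => π (d l) = i), m l

lemma aux_continuous_mulVec {X : Type*} [TopologicalSpace X] {p q : ℕ}
    (C : Matrix (Fin p) (Fin q) ℝ) {f : X → Fin q → ℝ} (hf : Continuous f) :
    Continuous (fun s => C.mulVec (f s)) := by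
  apply continuous_pi; intro j
  simp only [Matrix.mulVec, dotProduct]
  exact continuous_finset_sum _ fun l _ => continuous_const.mul ((continuous_apply l).comp hf)

lemma aux_measurable_mulVec {p q : ℕ} (C : Matrix (Fin p) (Fin q) ℝ)
    {f : ℝ → Fin q → ℝ} (hf : Measurable f) :
    Measurable (fun s => C.mulVec (f s)) := by
  apply measurable_pi_lambda; intro j
  simp only [Matrix.mulVec, dotProduct]
  exact Finset.measurable_sum _ fun l _ => ((measurable_pi_apply l).comp hf).const_mul _

lemma aux_II {k : ℕ} {f : ℝ → Fin k → ℝ} (hf : Measurable f) {C : ℝ}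
    (hC : ∀ t, ‖f t‖ ≤ C) (a b : ℝ) : IntervalIntegrable f volume a b := by
  rw [intervalIntegrable_iff]
  refine MeasureTheory.Integrable.mono' (g := fun _ => C)
    (MeasureTheory.integrableOn_const (ne_of_lt ?_) (by simp)) hf.aestronglyMeasurable
    (Filter.Eventually.of_forall fun t => hC t)
  rw [Set.uIoc]
  exact measure_Ioc_lt_top

lemma aux_norm_mulVec_le {p q : ℕ} (C : Matrix (Fin p) (Fin q) ℝ) (v : Fin q → ℝ) :
    ‖C.mulVec v‖ ≤ ‖LinearMap.toContinuousLinearMap C.mulVecLin‖ * ‖v‖ := by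
  simpa using (LinearMap.toContinuousLinearMap C.mulVecLin).le_opNorm v

lemma aux_lipschitz_mulVec {p q : ℕ} (C : Matrix (Fin p) (Fin q) ℝ) :
    LipschitzWith ‖LinearMap.toContinuousLinearMap C.mulVecLin‖₊ (fun v => C.mulVec v) := by
  exact (LinearMap.toContinuousLinearMap C.mulVecLin).lipschitz

lemma aux_norm_le_of_box {k : ℕ} {f : ℝ → Fin k → ℝ} {lo hi : Fin k → ℝ}
    (hbox : ∀ t i, lo i ≤ f t i ∧ f t i ≤ hi i) (t : ℝ) : ‖f t‖ ≤ ‖lo‖ + ‖hi‖ := by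
  rw [pi_norm_le_iff_of_nonneg (by positivity)]
  intro i
  have h1 := norm_le_pi_norm lo i
  have h2 := norm_le_pi_norm hi i
  rw [Real.norm_eq_abs] at h1 h2 ⊢
  have hb := hbox t i
  rw [abs_le]
  constructor
  · have := neg_abs_le (lo i); linarith [abs_nonneg (hi i)]
  · have := le_abs_self (hi i); linarith [abs_nonneg (lo i)]

/-- Theorem 1, part 2: from a reduced admissible pair `(û, ẑ)` one recovers, via the
affine disaggregation formula, an admissible control `u` of the original system with
`(L·B)·u = û`, whose trajectory lumps onto `ẑ` and attains the same cost. -/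
theorem optimality_preservation_part2 {N n K : ℕ} (π : Fin N → Fin n)
    (hπ : Function.Surjective π) (A : Matrix (Fin N) (Fin N) ℝ)
    (hCE : aggL π * A = aggL π * A * avgL π * aggL π)
    (d : Fin K → Fin N) (hd : Function.Injective d)
    (B : Matrix (Fin N) (Fin K) ℝ)
    (hB : ∀ (j : Fin N) (l : Fin K), B j l = if j = d l then 1 else 0)
    (m M : Fin K → ℝ) (hmM : ∀ l, m l ≤ M l)
    (F : (Fin N → ℝ) → ℝ) (R : ℝ → (Fin N → ℝ) → (Fin K → ℝ) → ℝ)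
    (Fhat : (Fin n → ℝ) → ℝ) (Rhat : ℝ → (Fin n → ℝ) → (Fin n → ℝ) → ℝ)
    (hFhat : ∀ x : Fin N → ℝ, F x = Fhat ((aggL π).mulVec x))
    (hRhat : ∀ (t : ℝ) (x : Fin N → ℝ) (v : Fin K → ℝ),
      R t x v = Rhat t ((aggL π).mulVec x) ((aggL π * B).mulVec v))
    (x0 : Fin N → ℝ)
    -- the reduced admissible pair `(û, ẑ)` from `L·x0`
    (uhat : ℝ → Fin n → ℝ) (huhat : Measurable uhat)
    (huhatbox : ∀ t : ℝ, ∀ i : Fin n,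
      redBound π d m i ≤ uhat t i ∧ uhat t i ≤ redBound π d M i)
    (zhat : ℝ → Fin n → ℝ) (hzhat : Continuous zhat)
    (hzhateq : ∀ t : ℝ, 0 ≤ t →
      zhat t = (aggL π).mulVec x0 +
        ∫ s in (0:ℝ)..t, ((aggL π * A * avgL π).mulVec (zhat s) + uhat s))
    -- the disaggregated control `u`
    (u : ℝ → Fin K → ℝ)
    (hu_def : ∀ (t : ℝ) (l : Fin K), u t l =
      if redBound π d m (π (d l)) < redBound π d M (π (d l)) then
        m l + ((M l - m l) / (redBound π d M (π (d l)) - redBound π d m (π (d l)))) *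
          (uhat t (π (d l)) - redBound π d m (π (d l)))
      else m l) :
    Measurable u ∧
    (∀ t : ℝ, ∀ l : Fin K, m l ≤ u t l ∧ u t l ≤ M l) ∧
    (∀ t : ℝ, (aggL π * B).mulVec (u t) = uhat t) ∧
    (∀ x : ℝ → Fin N → ℝ, Continuous x →
      (∀ t : ℝ, 0 ≤ t →
        x t = x0 + ∫ s in (0:ℝ)..t, (A.mulVec (x s) + B.mulVec (u s))) →
      (∀ t : ℝ, 0 ≤ t → (aggL π).mulVec (x t) = zhat t) ∧
      (∀ T : ℝ, 0 ≤ T →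
        F (x T) + (∫ t in (0:ℝ)..T, R t (x t) (u t)) =
          Fhat (zhat T) + ∫ t in (0:ℝ)..T, Rhat t (zhat t) (uhat t))) := by
  classical
  have hmhMh : ∀ i, redBound π d m i ≤ redBound π d M i := fun i =>
    Finset.sum_le_sum (fun l _ => hmM l)
  -- measurability of u
  have hu_meas : Measurable u := by
    have hue : u = fun t l =>
        if redBound π d m (π (d l)) < redBound π d M (π (d l)) then
          m l + ((M l - m l) / (redBound π d M (π (d l)) - redBound π d m (π (d l)))) *
            (uhat t (π (d l)) - redBound π d m (π (d l)))
        else m l := by funext t l; exact hu_def t l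
    rw [hue]
    apply measurable_pi_lambda
    intro l
    split_ifs with h
    · exact ((((measurable_pi_apply _).comp huhat).sub measurable_const).const_mul _).const_add _
    · exact measurable_const
  -- box constraints
  have hbox : ∀ t : ℝ, ∀ l : Fin K, m l ≤ u t l ∧ u t l ≤ M l := by
    intro t l
    rw [hu_def]
    by_cases hlt : redBound π d m (π (d l)) < redBound π d M (π (d l))
    · rw [if_pos hlt]
      have hD : 0 < redBound π d M (π (d l)) - redBound π d m (π (d l)) := sub_pos.2 hlt
      have hc0 : 0 ≤ uhat t (π (d l)) - redBound π d m (π (d l)) :=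
        sub_nonneg.2 (huhatbox t _).1
      have hc1 : uhat t (π (d l)) - redBound π d m (π (d l)) ≤
          redBound π d M (π (d l)) - redBound π d m (π (d l)) :=
        sub_le_sub_right (huhatbox t _).2 _
      have hMm : 0 ≤ M l - m l := sub_nonneg.2 (hmM l)
      have hr : 0 ≤ (M l - m l) / (redBound π d M (π (d l)) - redBound π d m (π (d l))) :=
        div_nonneg hMm hD.le
      have h1 : 0 ≤ (M l - m l) / (redBound π d M (π (d l)) - redBound π d m (π (d l))) *
          (uhat t (π (d l)) - redBound π d m (π (d l))) := mul_nonneg hr hc0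
      have h2 : (M l - m l) / (redBound π d M (π (d l)) - redBound π d m (π (d l))) *
          (uhat t (π (d l)) - redBound π d m (π (d l))) ≤ M l - m l := by
        calc (M l - m l) / (redBound π d M (π (d l)) - redBound π d m (π (d l))) *
            (uhat t (π (d l)) - redBound π d m (π (d l)))
            ≤ (M l - m l) / (redBound π d M (π (d l)) - redBound π d m (π (d l))) *
              (redBound π d M (π (d l)) - redBound π d m (π (d l))) :=
              mul_le_mul_of_nonneg_left hc1 hr
          _ = M l - m l := div_mul_cancel₀ _ hD.ne'
      exact ⟨by linarith, by linarith⟩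
    · rw [if_neg hlt]; exact ⟨le_refl _, hmM l⟩
  -- L·B·u = û
  have hLB : ∀ (i : Fin n) (l : Fin K), (aggL π * B) i l = if π (d l) = i then 1 else 0 := by
    intro i l
    simp only [Matrix.mul_apply, aggL, hB, mul_ite, mul_one, mul_zero]
    simp [Finset.sum_ite_eq']
  have hLBmul : ∀ (v : Fin K → ℝ) (i : Fin n), ((aggL π * B).mulVec v) i =
      ∑ l ∈ Finset.univ.filter (fun l : Fin K => π (d l) = i), v l := by
    intro v i
    simp only [Matrix.mulVec, dotProduct, hLB, ite_mul, one_mul, zero_mul]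
    rw [Finset.sum_filter]
  have hLBu : ∀ t : ℝ, (aggL π * B).mulVec (u t) = uhat t := by
    intro t
    funext i
    rw [hLBmul]
    by_cases hlt : redBound π d m i < redBound π d M i
    · have hD : redBound π d M i - redBound π d m i ≠ 0 := sub_ne_zero.2 hlt.ne'
      have hu' : ∀ l ∈ Finset.univ.filter (fun l : Fin K => π (d l) = i),
          u t l = m l + (M l - m l) *
            ((uhat t i - redBound π d m i) / (redBound π d M i - redBound π d m i)) := by
        intro l hl
        rw [Finset.mem_filter] at hl
        rw [hu_def, hl.2, if_pos hlt]
        ring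
      rw [Finset.sum_congr rfl hu', Finset.sum_add_distrib, ← Finset.sum_mul,
        Finset.sum_sub_distrib]
      have e1 : ∑ l ∈ Finset.univ.filter (fun l : Fin K => π (d l) = i), m l
          = redBound π d m i := rfl
      have e2 : ∑ l ∈ Finset.univ.filter (fun l : Fin K => π (d l) = i), M l
          = redBound π d M i := rfl
      rw [e1, e2]
      field_simp
      ring
    · have heq : redBound π d m i = redBound π d M i := le_antisymm (hmhMh i) (not_lt.1 hlt)
      have huh : uhat t i = redBound π d m i :=
        le_antisymm (heq ▸ (huhatbox t i).2) (huhatbox t i).1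
      have hu' : ∀ l ∈ Finset.univ.filter (fun l : Fin K => π (d l) = i), u t l = m l := by
        intro l hl
        rw [Finset.mem_filter] at hl
        rw [hu_def, hl.2, if_neg hlt]
      rw [Finset.sum_congr rfl hu', huh]
      rfl
  refine ⟨hu_meas, hbox, hLBu, ?_⟩
  -- part 4: trajectory lumping and cost preservation
  intro x hx hxeq
  have huN : ∀ t, ‖u t‖ ≤ ‖m‖ + ‖M‖ := aux_norm_le_of_box hbox
  have huhatN : ∀ t, ‖uhat t‖ ≤ ‖redBound π d m‖ + ‖redBound π d M‖ :=
    aux_norm_le_of_box huhatbox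
  have huhatII : ∀ a b : ℝ, IntervalIntegrable uhat volume a b :=
    fun a b => aux_II huhat huhatN a b
  have hBuN : ∀ s, ‖B.mulVec (u s)‖ ≤
      ‖LinearMap.toContinuousLinearMap B.mulVecLin‖ * (‖m‖ + ‖M‖) := fun s =>
    le_trans (aux_norm_mulVec_le B (u s))
      (mul_le_mul_of_nonneg_left (huN s) (norm_nonneg _))
  have hfII : ∀ a b : ℝ, IntervalIntegrable
      (fun s => A.mulVec (x s) + B.mulVec (u s)) volume a b := by
    intro a b
    exact ((aux_continuous_mulVec A hx).intervalIntegrable a b).add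
      (aux_II (aux_measurable_mulVec B hu_meas) hBuN a b)
  -- lumped integral equation for L x
  have hLx : ∀ t : ℝ, 0 ≤ t → (aggL π).mulVec (x t) = (aggL π).mulVec x0 +
      ∫ s in (0:ℝ)..t, ((aggL π * A * avgL π).mulVec ((aggL π).mulVec (x s)) + uhat s) := by
    intro t ht
    rw [hxeq t ht, Matrix.mulVec_add]
    congr 1
    have hpush := (LinearMap.toContinuousLinearMap (aggL π).mulVecLin).intervalIntegral_comp_comm
      (hfII 0 t)
    simp only [LinearMap.coe_toContinuousLinearMap', Matrix.mulVecLin_apply] at hpush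
    rw [← hpush]
    apply intervalIntegral.integral_congr
    intro s _
    show aggL π *ᵥ (A *ᵥ x s + B *ᵥ u s) = (aggL π * A * avgL π) *ᵥ (aggL π *ᵥ x s) + uhat s
    rw [Matrix.mulVec_add, Matrix.mulVec_mulVec, Matrix.mulVec_mulVec, hLBu s,
      Matrix.mulVec_mulVec, ← hCE]
  set Ah := aggL π * A * avgL π with hAh
  set g : ℝ → Fin n → ℝ := fun τ => (aggL π).mulVec (x τ) - zhat τ with hg
  have hg_cont : Continuous g := (aux_continuous_mulVec _ hx).sub hzhat
  have hh_cont : Continuous (fun s => Ah.mulVec (g s)) := aux_continuous_mulVec _ hg_cont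
  have key : ∀ t : ℝ, 0 ≤ t → g t = ∫ s in (0:ℝ)..t, Ah.mulVec (g s) := by
    intro t ht
    have h1 : IntervalIntegrable
        (fun s => Ah.mulVec ((aggL π).mulVec (x s)) + uhat s) volume 0 t :=
      ((aux_continuous_mulVec Ah (aux_continuous_mulVec _ hx)).intervalIntegrable 0 t).add
        (huhatII 0 t)
    have h2 : IntervalIntegrable (fun s => Ah.mulVec (zhat s) + uhat s) volume 0 t :=
      ((aux_continuous_mulVec Ah hzhat).intervalIntegrable 0 t).add (huhatII 0 t)
    have : g t = (∫ s in (0:ℝ)..t, (Ah.mulVec ((aggL π).mulVec (x s)) + uhat s)) -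
        ∫ s in (0:ℝ)..t, (Ah.mulVec (zhat s) + uhat s) := by
      rw [hg]
      simp only
      rw [hLx t ht, hzhateq t ht]
      abel
    rw [this, ← intervalIntegral.integral_sub h1 h2]
    apply intervalIntegral.integral_congr
    intro s _
    show Ah *ᵥ (aggL π *ᵥ x s) + uhat s - (Ah *ᵥ zhat s + uhat s)
      = Ah *ᵥ (aggL π *ᵥ x s - zhat s)
    rw [Matrix.mulVec_sub]
    abel
  -- Gronwall / uniqueness: g = 0 on [0, ∞)
  have hmain : ∀ t : ℝ, 0 ≤ t → g t = 0 := by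
    intro t ht
    set φ : ℝ → Fin n → ℝ := fun τ => ∫ s in (0:ℝ)..τ, Ah.mulVec (g s) with hφ
    have hφd : ∀ τ : ℝ, HasDerivAt φ (Ah.mulVec (g τ)) τ := by
      intro τ
      exact intervalIntegral.integral_hasDerivAt_right
        (hh_cont.intervalIntegrable 0 τ)
        hh_cont.aestronglyMeasurable.stronglyMeasurableAtFilter
        hh_cont.continuousAt
    have hφg : ∀ τ : ℝ, 0 ≤ τ → g τ = φ τ := key
    have heq0 : Set.EqOn φ (fun _ => (0 : Fin n → ℝ)) (Set.Icc 0 t) := by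
      apply ODE_solution_unique (v := fun _ v => Ah.mulVec v)
        (K := ‖LinearMap.toContinuousLinearMap Ah.mulVecLin‖₊)
        (fun _ => aux_lipschitz_mulVec Ah)
      · exact fun τ _ => ((hφd τ).continuousAt).continuousWithinAt
      · intro τ hτ
        have := (hφd τ).hasDerivWithinAt (s := Set.Ici τ)
        rwa [hφg τ hτ.1] at this
      · exact continuousOn_const
      · intro τ _
        simpa [Matrix.mulVec_zero] using
          (hasDerivWithinAt_const τ (Set.Ici τ) (0 : Fin n → ℝ))
      · simp [hφ]
    have := heq0 (Set.mem_Icc.2 ⟨ht, le_refl t⟩)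
    rw [hφg t ht]
    exact this
  have hLz : ∀ t : ℝ, 0 ≤ t → (aggL π).mulVec (x t) = zhat t := by
    intro t ht
    have := hmain t ht
    rw [hg] at this
    simpa [sub_eq_zero] using this
  refine ⟨hLz, ?_⟩
  intro T hT
  have h1 : F (x T) = Fhat (zhat T) := by rw [hFhat, hLz T hT]
  have h2 : (∫ t in (0:ℝ)..T, R t (x t) (u t)) =
      ∫ t in (0:ℝ)..T, Rhat t (zhat t) (uhat t) := by
    apply intervalIntegral.integral_congr
    intro s hs
    rw [Set.uIcc_of_le hT] at hs
    show R s (x s) (u s) = Rhat s (zhat s) (uhat s)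
    rw [hRhat, hLBu s, hLz s hs.1]
  rw [h1, h2]
end

section
/- (Theorem 2, forward direction for infima.) Let the partition encoded by π with matrices L, L̄ be a control equivalence for A ∈ ℝ^{N×N}, let B have unit-vector columns given by an injective driver map d, let m ≤ M componentwise, and let F, R be costs constant on the partition with induced reduced costs F̂, R̂. Then for every x0 ∈ ℝ^N and every T ≥ 0, V^inf(x0,T) = V̂^inf(L·x0,T). -/
open Matrix MeasureTheory

/-- The set of cost values `J_u(x0, T)` attained by admissible pairs `(u, x)` from `x0`
(with integrable running cost) at horizon `T`. -/
def costSet {N K : ℕ} (A : Matrix (Fin N) (Fin N) ℝ) (B : Matrix (Fin N) (Fin K) ℝ)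
    (m M : Fin K → ℝ) (F : (Fin N → ℝ) → ℝ) (R : ℝ → (Fin N → ℝ) → (Fin K → ℝ) → ℝ)
    (x0 : Fin N → ℝ) (T : ℝ) : Set ℝ :=
  { c | ∃ (u : ℝ → Fin K → ℝ) (x : ℝ → Fin N → ℝ),
      Measurable u ∧ (∀ t : ℝ, ∀ l : Fin K, m l ≤ u t l ∧ u t l ≤ M l) ∧
      Continuous x ∧
      (∀ t : ℝ, 0 ≤ t →
        x t = x0 + ∫ s in (0:ℝ)..t, (A.mulVec (x s) + B.mulVec (u s))) ∧
      IntervalIntegrable (fun t => R t (x t) (u t)) volume 0 T ∧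
      c = F (x T) + ∫ t in (0:ℝ)..T, R t (x t) (u t) }

/-- The set of reduced cost values `Ĵ_û(ẑ0, T)` attained by reduced admissible pairs
`(û, ẑ)` from `ẑ0` (with integrable running cost) at horizon `T`. -/
def redCostSet {n : ℕ} (Ahat : Matrix (Fin n) (Fin n) ℝ) (mhat Mhat : Fin n → ℝ)
    (Fhat : (Fin n → ℝ) → ℝ) (Rhat : ℝ → (Fin n → ℝ) → (Fin n → ℝ) → ℝ)
    (z0 : Fin n → ℝ) (T : ℝ) : Set ℝ :=
  { c | ∃ (uhat : ℝ → Fin n → ℝ) (zhat : ℝ → Fin n → ℝ),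
      Measurable uhat ∧ (∀ t : ℝ, ∀ i : Fin n, mhat i ≤ uhat t i ∧ uhat t i ≤ Mhat i) ∧
      Continuous zhat ∧
      (∀ t : ℝ, 0 ≤ t →
        zhat t = z0 + ∫ s in (0:ℝ)..t, (Ahat.mulVec (zhat s) + uhat s)) ∧
      IntervalIntegrable (fun t => Rhat t (zhat t) (uhat t)) volume 0 T ∧
      c = Fhat (zhat T) + ∫ t in (0:ℝ)..T, Rhat t (zhat t) (uhat t) }

set_option maxHeartbeats 1600000

private lemma II_of_bdd {p : ℕ} {f : ℝ → Fin p → ℝ} (hm : Measurable f) {c : ℝ}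
    (hb : ∀ t, ‖f t‖ ≤ c) (a b : ℝ) : IntervalIntegrable f volume a b := by
  refine (intervalIntegrable_const (c := c)).mono_fun hm.aestronglyMeasurable ?_
  exact Filter.Eventually.of_forall fun t => (hb t).trans (le_abs_self c)


private lemma linODE_unique {p : ℕ} (T : (Fin p → ℝ) →L[ℝ] (Fin p → ℝ)) (f : ℝ → Fin p → ℝ)
    (hf : ∀ a b : ℝ, IntervalIntegrable f volume a b) (x0 : Fin p → ℝ)
    (x y : ℝ → Fin p → ℝ) (hx : Continuous x) (hy : Continuous y)
    (hxe : ∀ t, 0 ≤ t → x t = x0 + ∫ s in (0:ℝ)..t, (T (x s) + f s))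
    (hye : ∀ t, 0 ≤ t → y t = x0 + ∫ s in (0:ℝ)..t, (T (y s) + f s)) :
    ∀ t, 0 ≤ t → x t = y t := by
  set w : ℝ → Fin p → ℝ := fun t => x t - y t with hw_def
  have hwc : Continuous w := hx.sub hy
  have hTw_cont : Continuous fun s => T (w s) := T.continuous.comp hwc
  have hw : ∀ t, 0 ≤ t → w t = ∫ s in (0:ℝ)..t, T (w s) := by
    intro t ht
    have h1 : IntervalIntegrable (fun s => T (x s) + f s) volume 0 t :=
      ((T.continuous.comp hx).intervalIntegrable _ _).add (hf 0 t)
    have h2 : IntervalIntegrable (fun s => T (y s) + f s) volume 0 t :=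
      ((T.continuous.comp hy).intervalIntegrable _ _).add (hf 0 t)
    have : w t = (∫ s in (0:ℝ)..t, (T (x s) + f s)) - ∫ s in (0:ℝ)..t, (T (y s) + f s) := by
      rw [hw_def]; simp only [hxe t ht, hye t ht]; abel
    rw [this, ← intervalIntegral.integral_sub h1 h2]
    apply intervalIntegral.integral_congr
    intro s _
    simp [w, map_sub]
  set W : ℝ → Fin p → ℝ := fun t => ∫ s in (0:ℝ)..t, T (w s) with hW_def
  have hWd : ∀ t, HasDerivAt W (T (w t)) t := fun t =>
    intervalIntegral.integral_hasDerivAt_right (hTw_cont.intervalIntegrable _ _)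
      (hTw_cont.stronglyMeasurableAtFilter _ _) hTw_cont.continuousAt
  intro t ht
  have key : Set.EqOn W (fun _ => (0 : Fin p → ℝ)) (Set.Icc 0 t) := by
    apply ODE_solution_unique (v := fun _ z => T z) (K := ‖T‖₊) (fun _ => T.lipschitz)
    · exact (intervalIntegral.continuous_primitive
        (fun a b => hTw_cont.intervalIntegrable a b) 0).continuousOn
    · intro s hs
      have : T (w s) = T (W s) := by rw [hw s hs.1]
      exact (this ▸ (hWd s)).hasDerivWithinAt
    · exact continuousOn_const
    · intro s _
      have h0 : HasDerivWithinAt (fun _ : ℝ => (0 : Fin p → ℝ)) 0 (Set.Ici s) s :=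
        (hasDerivAt_const s (0 : Fin p → ℝ)).hasDerivWithinAt
      simpa using h0
    · simp [hW_def]
  have hWt : W t = 0 := key ⟨ht, le_refl t⟩
  have : w t = 0 := (hw t ht).trans hWt
  exact sub_eq_zero.mp this

private lemma II_clm {p q : ℕ} (Φ : ℝ → (Fin p → ℝ) →L[ℝ] (Fin q → ℝ)) (hΦ : Continuous Φ)
    {f : ℝ → Fin p → ℝ} (hfm : Measurable f) {c0 : ℝ} (hfb : ∀ t, ‖f t‖ ≤ c0) (a b : ℝ) :
    IntervalIntegrable (fun r => Φ r (f r)) volume a b := by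
  rw [intervalIntegrable_iff]
  obtain ⟨C, hC⟩ := (isCompact_Icc (a := min a b) (b := max a b)).exists_bound_of_continuousOn
    hΦ.continuousOn
  apply Measure.integrableOn_of_bounded (M := C * c0) measure_Ioc_lt_top.ne
  · exact (ContinuousLinearMap.id ℝ _).aestronglyMeasurable_comp₂
      hΦ.aestronglyMeasurable hfm.aestronglyMeasurable
  · filter_upwards [ae_restrict_mem measurableSet_Ioc] with r hr
    have hr' : r ∈ Set.Icc (min a b) (max a b) := Set.Ioc_subset_Icc_self hr
    have h1 : ‖Φ r (f r)‖ ≤ ‖Φ r‖ * ‖f r‖ := (Φ r).le_opNorm (f r)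
    have h2 : ‖Φ r‖ ≤ C := hC r hr'
    have h3 : (0:ℝ) ≤ ‖f r‖ := norm_nonneg _
    calc ‖Φ r (f r)‖ ≤ ‖Φ r‖ * ‖f r‖ := h1
      _ ≤ C * c0 := mul_le_mul h2 (hfb r) h3 ((norm_nonneg _).trans h2)

private lemma IOn_clm {p q : ℕ} (Φ : ℝ → (Fin p → ℝ) →L[ℝ] (Fin q → ℝ)) (hΦ : Continuous Φ)
    {f : ℝ → Fin p → ℝ} (hfm : Measurable f) {c0 : ℝ} (hfb : ∀ t, ‖f t‖ ≤ c0) (a b : ℝ) :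
    IntegrableOn (fun r => Φ r (f r)) (Set.Ioc a b) volume := by
  rcases le_or_gt a b with h | h
  · exact (intervalIntegrable_iff_integrableOn_Ioc_of_le h).mp (II_clm Φ hΦ hfm hfb a b)
  · rw [Set.Ioc_eq_empty (not_lt.mpr h.le)]; exact integrableOn_empty

private lemma linODE_exists {p : ℕ} (T : (Fin p → ℝ) →L[ℝ] (Fin p → ℝ)) (f : ℝ → Fin p → ℝ)
    (hfm : Measurable f) {c0 : ℝ} (hfb : ∀ t, ‖f t‖ ≤ c0) (x0 : Fin p → ℝ) :
    ∃ x : ℝ → Fin p → ℝ, Continuous x ∧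
      ∀ t, 0 ≤ t → x t = x0 + ∫ s in (0:ℝ)..t, (T (x s) + f s) := by
  letI : NormedAlgebra ℚ ((Fin p → ℝ) →L[ℝ] (Fin p → ℝ)) := NormedAlgebra.restrictScalars ℚ ℝ _
  set P : ℝ → (Fin p → ℝ) →L[ℝ] (Fin p → ℝ) := fun t => NormedSpace.exp (t • T) with hP_def
  have hPcont : Continuous P := NormedSpace.exp_continuous.comp (continuous_id.smul continuous_const)
  have hPadd : ∀ a b : ℝ, P (a + b) = P a * P b := by
    intro a b
    have hc : Commute (a • T) (b • T) := ((Commute.refl T).smul_left a).smul_right b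
    rw [hP_def]; simp only; rw [add_smul]
    exact NormedSpace.exp_add_of_commute hc
  have hP0 : P 0 = 1 := by simp [hP_def]
  have hPv : ∀ (t : ℝ) (v : Fin p → ℝ), HasDerivAt (fun s => P s v) (T (P t v)) t := by
    intro t v
    have h1 : HasDerivAt P (T * P t) t := hasDerivAt_exp_smul_const' T t
    have h2 := h1.clm_apply (hasDerivAt_const t v)
    simpa using h2
  have hPf_int : ∀ a b : ℝ, IntervalIntegrable (fun r => P (-r) (f r)) volume a b :=
    fun a b => II_clm (fun r => P (-r)) (hPcont.comp continuous_neg) hfm hfb a b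
  set y : ℝ → Fin p → ℝ := fun t => ∫ r in (0:ℝ)..t, P (-r) (f r) with hy_def
  have hyc : Continuous y := intervalIntegral.continuous_primitive hPf_int 0
  set x : ℝ → Fin p → ℝ := fun t => P t (x0 + y t) with hx_def
  have hxc : Continuous x := hPcont.clm_apply (continuous_const.add hyc)
  refine ⟨x, hxc, ?_⟩
  intro t ht
  have hfint : ∀ a b : ℝ, IntervalIntegrable f volume a b := by
    intro a b
    have := II_clm (fun _ => ContinuousLinearMap.id ℝ (Fin p → ℝ)) continuous_const hfm hfb a b
    simpa using this
  have hPsub : ∀ a b : ℝ, P (a - b) = P a * P (-b) := by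
    intro a b; rw [sub_eq_add_neg]; exact hPadd a (-b)
  have E2 : ∫ s in (0:ℝ)..t, T (P s (y s)) = P t (y t) - ∫ s in (0:ℝ)..t, f s := by
    set f2 : ℝ → ℝ → Fin p → ℝ := fun s r => if r < s then T (P (s - r) (f r)) else 0 with hf2
    set μt := volume.restrict (Set.Ioc (0:ℝ) t) with hμt
    have hGm : AEStronglyMeasurable (Function.uncurry f2) (μt.prod μt) := by
      have h1 : Continuous fun q : ℝ × ℝ => T.comp (P (q.1 - q.2)) :=
        ((ContinuousLinearMap.compL ℝ (Fin p → ℝ) (Fin p → ℝ) (Fin p → ℝ)) T).continuous.comp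
          (hPcont.comp (continuous_fst.sub continuous_snd))
      have h2 : AEStronglyMeasurable
          (fun q : ℝ × ℝ => (T.comp (P (q.1 - q.2))) (f q.2)) (μt.prod μt) :=
        (ContinuousLinearMap.id ℝ _).aestronglyMeasurable_comp₂ h1.aestronglyMeasurable
          (hfm.comp measurable_snd).aestronglyMeasurable
      have heq : (Function.uncurry f2)
          = Set.indicator {q : ℝ × ℝ | q.2 < q.1}
              (fun q => (T.comp (P (q.1 - q.2))) (f q.2)) := by
        funext q
        rw [Set.indicator_apply]
        by_cases h : q.2 < q.1 <;> simp [Function.uncurry, hf2, h]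
      rw [heq]
      exact h2.indicator (measurableSet_lt measurable_snd measurable_fst)
    obtain ⟨C, hC⟩ := (isCompact_Icc (a := -t) (b := t)).exists_bound_of_continuousOn
      hPcont.continuousOn
    have hC0 : 0 ≤ C := (norm_nonneg (P 0)).trans (hC 0 ⟨neg_nonpos.mpr ht, ht⟩)
    have hc00 : 0 ≤ c0 := (norm_nonneg _).trans (hfb 0)
    have hM0 : 0 ≤ ‖T‖ * C * c0 := mul_nonneg (mul_nonneg (norm_nonneg T) hC0) hc00
    have hprod : Integrable (Function.uncurry f2) (μt.prod μt) := by
      refine Integrable.mono' (integrable_const (‖T‖ * C * c0)) hGm ?_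
      rw [hμt, Measure.prod_restrict]
      filter_upwards [ae_restrict_mem (measurableSet_Ioc.prod measurableSet_Ioc)] with q hq
      obtain ⟨hq1, hq2⟩ := hq
      by_cases h : q.2 < q.1
      · simp only [Set.mem_Ioc] at hq1 hq2
        have hw : q.1 - q.2 ∈ Set.Icc (-t) t :=
          Set.mem_Icc.mpr ⟨by linarith [hq1.1, hq2.2], by linarith [hq1.2, hq2.1]⟩
        have : Function.uncurry f2 q = T ((P (q.1 - q.2)) (f q.2)) := by
          simp [Function.uncurry, hf2, h]
        rw [this]
        calc ‖T ((P (q.1 - q.2)) (f q.2))‖ ≤ ‖T‖ * ‖(P (q.1 - q.2)) (f q.2)‖ := T.le_opNorm _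
          _ ≤ ‖T‖ * (‖P (q.1 - q.2)‖ * ‖f q.2‖) :=
              mul_le_mul_of_nonneg_left ((P _).le_opNorm _) (norm_nonneg T)
          _ ≤ ‖T‖ * (C * c0) := mul_le_mul_of_nonneg_left
              (mul_le_mul (hC _ hw) (hfb q.2) (norm_nonneg _) hC0) (norm_nonneg T)
          _ = ‖T‖ * C * c0 := by ring
      · have : Function.uncurry f2 q = 0 := by simp [Function.uncurry, hf2, h]
        rw [this, norm_zero]; exact hM0
    have stepA : ∀ s ∈ Set.Ioc (0:ℝ) t,
        (∫ r in Set.Ioc (0:ℝ) t, f2 s r) = T (P s (y s)) := by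
      intro s hs
      have h0s : (0:ℝ) ≤ s := hs.1.le
      have hst : s ≤ t := hs.2
      have hint1 : IntegrableOn (fun r => f2 s r) (Set.Ioc (0:ℝ) s) volume := by
        have heq : (fun r => f2 s r)
            = Set.indicator (Set.Iio s) (fun r => (T.comp (P (s - r))) (f r)) := by
          funext r
          rw [Set.indicator_apply]
          by_cases h : r < s <;> simp [hf2, Set.mem_Iio, h]
        rw [heq]
        exact (IOn_clm (fun r => T.comp (P (s - r)))
          (((ContinuousLinearMap.compL ℝ (Fin p → ℝ) (Fin p → ℝ) (Fin p → ℝ)) T).continuous.comp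
            (hPcont.comp (continuous_const.sub continuous_id))) hfm hfb 0 s).indicator
          measurableSet_Iio
      have hint2 : IntegrableOn (fun r => f2 s r) (Set.Ioc s t) volume := by
        have heq : (fun r => f2 s r)
            = Set.indicator (Set.Iio s) (fun r => (T.comp (P (s - r))) (f r)) := by
          funext r
          rw [Set.indicator_apply]
          by_cases h : r < s <;> simp [hf2, Set.mem_Iio, h]
        rw [heq]
        exact (IOn_clm (fun r => T.comp (P (s - r)))
          (((ContinuousLinearMap.compL ℝ (Fin p → ℝ) (Fin p → ℝ) (Fin p → ℝ)) T).continuous.comp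
            (hPcont.comp (continuous_const.sub continuous_id))) hfm hfb s t).indicator
          measurableSet_Iio
      have hzero : (∫ r in Set.Ioc s t, f2 s r) = 0 := by
        rw [setIntegral_congr_fun measurableSet_Ioc
          (g := fun _ => (0 : Fin p → ℝ)) (fun r hr => if_neg (not_lt.mpr hr.1.le))]
        exact integral_zero _ _
      have hns : ∀ᵐ r : ℝ ∂volume, r ≠ s := by
        filter_upwards [compl_mem_ae_iff.mpr (measure_singleton s)] with r hr
        simpa using hr
      calc (∫ r in Set.Ioc (0:ℝ) t, f2 s r)
          = (∫ r in Set.Ioc (0:ℝ) s, f2 s r) + ∫ r in Set.Ioc s t, f2 s r := by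
            rw [← setIntegral_union (Set.Ioc_disjoint_Ioc_of_le le_rfl) measurableSet_Ioc hint1 hint2,
              Set.Ioc_union_Ioc_eq_Ioc h0s hst]
        _ = ∫ r in Set.Ioc (0:ℝ) s, f2 s r := by rw [hzero, add_zero]
        _ = ∫ r in Set.Ioc (0:ℝ) s, (T.comp (P s)) ((P (-r)) (f r)) := by
            refine setIntegral_congr_ae measurableSet_Ioc ?_
            filter_upwards [hns] with r hrne hr
            have hrs : r < s := lt_of_le_of_ne hr.2 hrne
            rw [hf2]
            simp only [if_pos hrs, hPsub s r, ContinuousLinearMap.mul_apply,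
              ContinuousLinearMap.comp_apply]
        _ = ∫ r in (0:ℝ)..s, (T.comp (P s)) ((P (-r)) (f r)) :=
            (intervalIntegral.integral_of_le h0s).symm
        _ = (T.comp (P s)) (∫ r in (0:ℝ)..s, (P (-r)) (f r)) :=
            ContinuousLinearMap.intervalIntegral_comp_comm _ (hPf_int 0 s)
        _ = T (P s (y s)) := rfl
    have stepB : ∀ r ∈ Set.Ioc (0:ℝ) t,
        (∫ s in Set.Ioc (0:ℝ) t, f2 s r) = P (t - r) (f r) - f r := by
      intro r hr
      have h0r : (0:ℝ) ≤ r := hr.1.le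
      have hrt : r ≤ t := hr.2
      have hcont2 : Continuous fun s => T (P (s - r) (f r)) :=
        T.continuous.comp
          (((hPcont.comp (continuous_id.sub continuous_const))).clm_apply continuous_const)
      have hindic : (fun s => f2 s r)
          = Set.indicator (Set.Ioi r) (fun s => T (P (s - r) (f r))) := by
        funext s
        rw [Set.indicator_apply]
        by_cases h : r < s <;> simp [hf2, Set.mem_Ioi, h]
      have hint1 : IntegrableOn (fun s => f2 s r) (Set.Ioc (0:ℝ) r) volume := by
        rw [hindic]
        exact (hcont2.integrableOn_Ioc).indicator measurableSet_Ioi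
      have hint2 : IntegrableOn (fun s => f2 s r) (Set.Ioc r t) volume := by
        rw [hindic]
        exact (hcont2.integrableOn_Ioc).indicator measurableSet_Ioi
      have hzero : (∫ s in Set.Ioc (0:ℝ) r, f2 s r) = 0 := by
        rw [setIntegral_congr_fun measurableSet_Ioc
          (g := fun _ => (0 : Fin p → ℝ)) (fun s hs => if_neg (not_lt.mpr hs.2))]
        exact integral_zero _ _
      have hder : ∀ s : ℝ, HasDerivAt (fun s' => P (s' - r) (f r)) (T (P (s - r) (f r))) s := by
        intro s
        have h1 := hPv (s - r) (f r)
        have h2 : HasDerivAt (fun s' : ℝ => s' - r) 1 s := (hasDerivAt_id s).sub_const r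
        have h3 := HasDerivAt.scomp s h1 h2
        simpa [Function.comp_def] using h3
      calc (∫ s in Set.Ioc (0:ℝ) t, f2 s r)
          = (∫ s in Set.Ioc (0:ℝ) r, f2 s r) + ∫ s in Set.Ioc r t, f2 s r := by
            rw [← setIntegral_union (Set.Ioc_disjoint_Ioc_of_le le_rfl) measurableSet_Ioc hint1 hint2,
              Set.Ioc_union_Ioc_eq_Ioc h0r hrt]
        _ = ∫ s in Set.Ioc r t, f2 s r := by rw [hzero, zero_add]
        _ = ∫ s in Set.Ioc r t, T (P (s - r) (f r)) :=
            setIntegral_congr_fun measurableSet_Ioc (fun s hs => if_pos hs.1)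
        _ = ∫ s in r..t, T (P (s - r) (f r)) := (intervalIntegral.integral_of_le hrt).symm
        _ = P (t - r) (f r) - f r := by
            rw [intervalIntegral.integral_eq_sub_of_hasDerivAt (fun s _ => hder s)
              (hcont2.intervalIntegrable r t)]
            simp [hP0]
    have hswap := MeasureTheory.integral_integral_swap hprod
    have hLHS : (∫ s, ∫ r, f2 s r ∂μt ∂μt) = ∫ s in (0:ℝ)..t, T (P s (y s)) := by
      rw [hμt, intervalIntegral.integral_of_le ht]
      exact setIntegral_congr_fun measurableSet_Ioc fun s hs => stepA s hs
    have hRHS : (∫ r, ∫ s, f2 s r ∂μt ∂μt) = P t (y t) - ∫ s in (0:ℝ)..t, f s := by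
      rw [hμt]
      have h1 : (∫ r in Set.Ioc (0:ℝ) t, ∫ s in Set.Ioc (0:ℝ) t, f2 s r)
          = ∫ r in Set.Ioc (0:ℝ) t, (P (t - r) (f r) - f r) :=
        setIntegral_congr_fun measurableSet_Ioc fun r hr => stepB r hr
      rw [h1, ← intervalIntegral.integral_of_le ht]
      have hPt_int : IntervalIntegrable (fun r => P (t - r) (f r)) volume 0 t :=
        II_clm (fun r => P (t - r)) (hPcont.comp (continuous_const.sub continuous_id)) hfm hfb 0 t
      rw [intervalIntegral.integral_sub hPt_int (hfint 0 t)]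
      congr 1
      have h2 : (∫ r in (0:ℝ)..t, P (t - r) (f r))
          = ∫ r in (0:ℝ)..t, (P t) ((P (-r)) (f r)) := by
        apply intervalIntegral.integral_congr
        intro r _
        simp only [hPsub, ContinuousLinearMap.mul_apply]
      rw [h2, ContinuousLinearMap.intervalIntegral_comp_comm _ (hPf_int 0 t), hy_def]
    rw [← hLHS, hswap, hRHS]
  have E1 : ∫ s in (0:ℝ)..t, T (P s x0) = P t x0 - x0 := by
    have hcont : Continuous fun s => T (P s x0) :=
      T.continuous.comp ((hPcont.clm_apply continuous_const))
    have := intervalIntegral.integral_eq_sub_of_hasDerivAt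
      (f := fun s => P s x0) (f' := fun s => T (P s x0))
      (fun s _ => hPv s x0) (hcont.intervalIntegrable 0 t)
    simpa [hP0] using this
  have hterm1 : Continuous fun s => T (P s x0) :=
    T.continuous.comp ((hPcont.clm_apply continuous_const))
  have hterm2 : Continuous fun s => T (P s (y s)) :=
    T.continuous.comp ((hPcont.clm_apply hyc))
  have key : (∫ s in (0:ℝ)..t, (T (x s) + f s)) = x t - x0 := by
    have hsplit : (∫ s in (0:ℝ)..t, (T (x s) + f s))
        = (∫ s in (0:ℝ)..t, T (P s x0)) + (∫ s in (0:ℝ)..t, T (P s (y s)))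
          + ∫ s in (0:ℝ)..t, f s := by
      rw [← intervalIntegral.integral_add (hterm1.intervalIntegrable 0 t)
        (hterm2.intervalIntegrable 0 t),
        ← intervalIntegral.integral_add (f := fun s => T (P s x0) + T (P s (y s)))
          ((hterm1.add hterm2).intervalIntegrable 0 t) (hfint 0 t)]
      apply intervalIntegral.integral_congr
      intro s _
      simp [hx_def, map_add]
    rw [hsplit, E1, E2, hx_def]
    simp [map_add]
    abel
  rw [key]
  abel

private lemma pi_norm_bound {K : ℕ} {m M v : Fin K → ℝ}
    (h : ∀ l, m l ≤ v l ∧ v l ≤ M l) : ‖v‖ ≤ ∑ l, (|m l| + |M l|) := by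
  have hnn : (0:ℝ) ≤ ∑ l, (|m l| + |M l|) :=
    Finset.sum_nonneg fun l _ => add_nonneg (abs_nonneg _) (abs_nonneg _)
  refine (pi_norm_le_iff_of_nonneg hnn).mpr fun l => ?_
  have h1 : |v l| ≤ |m l| + |M l| := by
    rcases h l with ⟨h1, h2⟩
    rw [abs_le]
    constructor
    · have := neg_abs_le (m l); linarith [abs_nonneg (M l)]
    · have := le_abs_self (M l); linarith [abs_nonneg (m l)]
  calc ‖v l‖ = |v l| := rfl
    _ ≤ |m l| + |M l| := h1
    _ ≤ ∑ l, (|m l| + |M l|) :=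
        Finset.single_le_sum (f := fun l => |m l| + |M l|) (fun l _ => add_nonneg (abs_nonneg _) (abs_nonneg _))
          (Finset.mem_univ l)

private lemma mulVec_LB {N n K : ℕ} (π : Fin N → Fin n) (d : Fin K → Fin N)
    (hd : Function.Injective d) (B : Matrix (Fin N) (Fin K) ℝ)
    (hB : ∀ (j : Fin N) (l : Fin K), B j l = if j = d l then 1 else 0)
    (v : Fin K → ℝ) (i : Fin n) :
    ((aggL π * B).mulVec v) i = ∑ l ∈ Finset.univ.filter (fun l : Fin K => π (d l) = i), v l := by
  have hLB : ∀ l : Fin K, (aggL π * B) i l = if π (d l) = i then 1 else 0 := by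
    intro l
    rw [Matrix.mul_apply]
    have : ∀ j : Fin N, aggL π i j * B j l = if j = d l then (if π (d l) = i then 1 else 0) else 0 := by
      intro j
      rw [hB, aggL]
      by_cases hj : j = d l
      · subst hj; simp
      · simp [hj]
    simp only [this]
    rw [Finset.sum_ite_eq' Finset.univ (d l)]
    simp
  simp only [Matrix.mulVec, dotProduct, hLB]
  rw [Finset.sum_filter]
  apply Finset.sum_congr rfl
  intro l _
  by_cases h : π (d l) = i <;> simp [h]

private lemma CE_mulVec {N n : ℕ} (π : Fin N → Fin n) (A : Matrix (Fin N) (Fin N) ℝ)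
    (hCE : aggL π * A = aggL π * A * avgL π * aggL π) (x : Fin N → ℝ) :
    (aggL π).mulVec (A.mulVec x)
      = (aggL π * A * avgL π).mulVec ((aggL π).mulVec x) := by
  rw [Matrix.mulVec_mulVec, Matrix.mulVec_mulVec]
  conv_lhs => rw [hCE]

/-- Theorem 2, forward direction for infima: under a control equivalence, the optimal (infimum) cost of the original system equals that of the reduced system. -/
theorem value_function_inf_preserved {N n K : ℕ} (π : Fin N → Fin n)
    (hπ : Function.Surjective π) (A : Matrix (Fin N) (Fin N) ℝ)
    (hCE : aggL π * A = aggL π * A * avgL π * aggL π)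
    (d : Fin K → Fin N) (hd : Function.Injective d)
    (B : Matrix (Fin N) (Fin K) ℝ)
    (hB : ∀ (j : Fin N) (l : Fin K), B j l = if j = d l then 1 else 0)
    (m M : Fin K → ℝ) (hmM : ∀ l, m l ≤ M l)
    (F : (Fin N → ℝ) → ℝ) (R : ℝ → (Fin N → ℝ) → (Fin K → ℝ) → ℝ)
    (Fhat : (Fin n → ℝ) → ℝ) (Rhat : ℝ → (Fin n → ℝ) → (Fin n → ℝ) → ℝ)
    (hFhat : ∀ x : Fin N → ℝ, F x = Fhat ((aggL π).mulVec x))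
    (hRhat : ∀ (t : ℝ) (x : Fin N → ℝ) (v : Fin K → ℝ),
      R t x v = Rhat t ((aggL π).mulVec x) ((aggL π * B).mulVec v))
    (x0 : Fin N → ℝ) (T : ℝ) (hT : 0 ≤ T) :
    sInf (costSet A B m M F R x0 T) =
      sInf (redCostSet (aggL π * A * avgL π) (redBound π d m) (redBound π d M)
        Fhat Rhat ((aggL π).mulVec x0) T) := by
  have hset : costSet A B m M F R x0 T
      = redCostSet (aggL π * A * avgL π) (redBound π d m) (redBound π d M)
        Fhat Rhat ((aggL π).mulVec x0) T := by
    set TL := LinearMap.toContinuousLinearMap (Matrix.mulVecLin (aggL π)) with hTL_def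
    have hTL : ∀ v, TL v = (aggL π).mulVec v := by
      intro v; rw [hTL_def, LinearMap.coe_toContinuousLinearMap', Matrix.mulVecLin_apply]
    set TB := LinearMap.toContinuousLinearMap (Matrix.mulVecLin B) with hTB_def
    have hTB : ∀ v, TB v = B.mulVec v := by
      intro v; rw [hTB_def, LinearMap.coe_toContinuousLinearMap', Matrix.mulVecLin_apply]
    set TA := LinearMap.toContinuousLinearMap (Matrix.mulVecLin A) with hTA_def
    have hTA : ∀ v, TA v = A.mulVec v := by
      intro v; rw [hTA_def, LinearMap.coe_toContinuousLinearMap', Matrix.mulVecLin_apply]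
    set TAh := LinearMap.toContinuousLinearMap (Matrix.mulVecLin (aggL π * A * avgL π))
      with hTAh_def
    have hTAh : ∀ v, TAh v = (aggL π * A * avgL π).mulVec v := by
      intro v; rw [hTAh_def, LinearMap.coe_toContinuousLinearMap', Matrix.mulVecLin_apply]
    set TLB := LinearMap.toContinuousLinearMap (Matrix.mulVecLin (aggL π * B)) with hTLB_def
    have hTLB : ∀ v, TLB v = (aggL π * B).mulVec v := by
      intro v; rw [hTLB_def, LinearMap.coe_toContinuousLinearMap', Matrix.mulVecLin_apply]
    ext c
    constructor
    · rintro ⟨u, x, hum, hub, hxc, hxe, hRint, hc⟩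
      set cu : ℝ := ∑ l, (|m l| + |M l|) with hcu_def
      have hun : ∀ t, ‖u t‖ ≤ cu := fun t => pi_norm_bound (hub t)
      have hBu_int : ∀ a b : ℝ, IntervalIntegrable (fun s => B.mulVec (u s)) volume a b := by
        intro a b
        have := II_clm (fun _ => TB) continuous_const hum hun a b
        simpa only [hTB] using this
      have hInt : ∀ t : ℝ, IntervalIntegrable
          (fun s => A.mulVec (x s) + B.mulVec (u s)) volume 0 t := by
        intro t
        refine IntervalIntegrable.add ?_ (hBu_int 0 t)
        have : Continuous fun s => A.mulVec (x s) := by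
          have := TA.continuous.comp hxc
          simpa only [Function.comp_def, hTA] using this
        exact this.intervalIntegrable 0 t
      refine ⟨fun t => (aggL π * B).mulVec (u t), fun t => (aggL π).mulVec (x t),
        ?_, ?_, ?_, ?_, ?_, ?_⟩
      · have : (fun t => (aggL π * B).mulVec (u t)) = fun t => TLB (u t) := by
          funext t; rw [hTLB]
        rw [this]
        exact TLB.continuous.measurable.comp hum
      · intro t i
        beta_reduce
        rw [mulVec_LB π d hd B hB (u t) i]
        constructor
        · exact Finset.sum_le_sum fun l _ => (hub t l).1
        · exact Finset.sum_le_sum fun l _ => (hub t l).2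
      · have : (fun t => (aggL π).mulVec (x t)) = fun t => TL (x t) := by
          funext t; rw [hTL]
        rw [this]
        exact TL.continuous.comp hxc
      · intro t ht
        beta_reduce
        rw [hxe t ht, Matrix.mulVec_add]
        congr 1
        have h1 : (aggL π).mulVec (∫ s in (0:ℝ)..t, (A.mulVec (x s) + B.mulVec (u s)))
            = ∫ s in (0:ℝ)..t, TL (A.mulVec (x s) + B.mulVec (u s)) := by
          rw [← hTL]
          exact (ContinuousLinearMap.intervalIntegral_comp_comm TL (hInt t)).symm
        rw [h1]
        apply intervalIntegral.integral_congr
        intro s _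
        beta_reduce
        rw [hTL, Matrix.mulVec_add, CE_mulVec π A hCE, Matrix.mulVec_mulVec, Matrix.mulVec_mulVec]
      · have heq : (fun t => Rhat t ((aggL π).mulVec (x t)) ((aggL π * B).mulVec (u t)))
            = fun t => R t (x t) (u t) := by
          funext t; rw [hRhat]
        rw [heq]
        exact hRint
      · rw [hc, hFhat]
        congr 1
        apply intervalIntegral.integral_congr
        intro s _
        beta_reduce
        rw [hRhat]
    · rintro ⟨uh, zh, huhm, huhb, hzc, hze, hRint, hc⟩
      have hmhMh : ∀ i, redBound π d m i ≤ redBound π d M i := fun i =>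
        Finset.sum_le_sum fun l _ => hmM l
      set θ : Fin n → ℝ → ℝ := fun i v =>
        if redBound π d M i = redBound π d m i then 0
        else (v - redBound π d m i) / (redBound π d M i - redBound π d m i) with hθ_def
      set u : ℝ → Fin K → ℝ := fun t l => m l + θ (π (d l)) (uh t (π (d l))) * (M l - m l)
        with hu_def
      have hθ01 : ∀ t i, 0 ≤ θ i (uh t i) ∧ θ i (uh t i) ≤ 1 := by
        intro t i
        by_cases h : redBound π d M i = redBound π d m i
        · simp [hθ_def, h]
        · have hlt : redBound π d m i < redBound π d M i :=
            lt_of_le_of_ne (hmhMh i) (Ne.symm h)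
          have hpos : 0 < redBound π d M i - redBound π d m i := sub_pos.mpr hlt
          simp only [hθ_def, if_neg h]
          constructor
          · exact div_nonneg (sub_nonneg.mpr (huhb t i).1) hpos.le
          · rw [div_le_one hpos]
            exact sub_le_sub_right (huhb t i).2 _
      have hub : ∀ t l, m l ≤ u t l ∧ u t l ≤ M l := by
        intro t l
        obtain ⟨h0, h1⟩ := hθ01 t (π (d l))
        have hd0 : (0:ℝ) ≤ M l - m l := sub_nonneg.mpr (hmM l)
        constructor
        · simp only [hu_def]; nlinarith
        · simp only [hu_def]; nlinarith
      have hum : Measurable u := by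
        apply measurable_pi_lambda
        intro l
        apply Measurable.add measurable_const
        apply Measurable.mul _ measurable_const
        have h1 : Measurable fun t => uh t (π (d l)) := (measurable_pi_apply _).comp huhm
        by_cases h : redBound π d M (π (d l)) = redBound π d m (π (d l))
        · simp only [hθ_def, if_pos h]
          exact measurable_const
        · simp only [hθ_def, if_neg h]
          exact (h1.sub measurable_const).div_const _
      have hsum : ∀ t i, ((aggL π * B).mulVec (u t)) i = uh t i := by
        intro t i
        rw [mulVec_LB π d hd B hB (u t) i]
        have e1 : (∑ l ∈ Finset.univ.filter (fun l : Fin K => π (d l) = i), m l)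
            = redBound π d m i := rfl
        have e2 : (∑ l ∈ Finset.univ.filter (fun l : Fin K => π (d l) = i), M l)
            = redBound π d M i := rfl
        have hcongr : ∀ l ∈ Finset.univ.filter (fun l : Fin K => π (d l) = i),
            u t l = m l + θ i (uh t i) * (M l - m l) := by
          intro l hl
          rw [Finset.mem_filter] at hl
          simp only [hu_def, hl.2]
        rw [Finset.sum_congr rfl hcongr, Finset.sum_add_distrib, ← Finset.mul_sum,
          Finset.sum_sub_distrib, e1, e2]
        by_cases h : redBound π d M i = redBound π d m i
        · have huhe : uh t i = redBound π d m i :=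
            le_antisymm (h ▸ (huhb t i).2) (huhb t i).1
          simp only [hθ_def, if_pos h]
          rw [huhe]; ring
        · simp only [hθ_def, if_neg h]
          rw [div_mul_cancel₀ _ (sub_ne_zero.mpr h)]
          ring
      have hsum' : ∀ t, (aggL π * B).mulVec (u t) = uh t := fun t => funext (hsum t)
      have hun : ∀ t, ‖u t‖ ≤ ∑ l, (|m l| + |M l|) := fun t => pi_norm_bound (hub t)
      have hfm : Measurable fun s => B.mulVec (u s) := by
        have heq : (fun s => B.mulVec (u s)) = fun s => TB (u s) := by funext s; rw [hTB]
        rw [heq]; exact TB.continuous.measurable.comp hum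
      have hfb : ∀ s, ‖B.mulVec (u s)‖ ≤ ‖TB‖ * (∑ l, (|m l| + |M l|)) := by
        intro s
        rw [← hTB]
        calc ‖TB (u s)‖ ≤ ‖TB‖ * ‖u s‖ := TB.le_opNorm _
          _ ≤ _ := mul_le_mul_of_nonneg_left (hun s) (norm_nonneg _)
      obtain ⟨x, hxc, hxe⟩ := linODE_exists TA (fun s => B.mulVec (u s)) hfm hfb x0
      have hxe' : ∀ t, 0 ≤ t →
          x t = x0 + ∫ s in (0:ℝ)..t, (A.mulVec (x s) + B.mulVec (u s)) := by
        intro t ht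
        rw [hxe t ht]
        congr 1
      have huh_int : ∀ a b : ℝ, IntervalIntegrable uh volume a b := fun a b =>
        II_of_bdd huhm (fun t => pi_norm_bound (huhb t)) a b
      have hInt : ∀ t : ℝ, IntervalIntegrable
          (fun s => A.mulVec (x s) + B.mulVec (u s)) volume 0 t := by
        intro t
        refine IntervalIntegrable.add ?_ ?_
        · have hcA : Continuous fun s => A.mulVec (x s) := by
            have := TA.continuous.comp hxc
            simpa only [Function.comp_def, hTA] using this
          exact hcA.intervalIntegrable 0 t
        · have := II_clm (fun _ => TB) continuous_const hum hun 0 t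
          simpa only [hTB] using this
      have hLxc : Continuous fun t => (aggL π).mulVec (x t) := by
        have heq : (fun t => (aggL π).mulVec (x t)) = fun t => TL (x t) := by
          funext t; rw [hTL]
        rw [heq]; exact TL.continuous.comp hxc
      have hLx : ∀ t, 0 ≤ t → (aggL π).mulVec (x t) = zh t := by
        apply linODE_unique TAh uh huh_int ((aggL π).mulVec x0) _ zh hLxc hzc
        · intro t ht
          beta_reduce
          rw [hxe' t ht, Matrix.mulVec_add]
          congr 1
          have h1 : (aggL π).mulVec (∫ s in (0:ℝ)..t, (A.mulVec (x s) + B.mulVec (u s)))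
              = ∫ s in (0:ℝ)..t, TL (A.mulVec (x s) + B.mulVec (u s)) := by
            rw [← hTL]
            exact (ContinuousLinearMap.intervalIntegral_comp_comm TL (hInt t)).symm
          rw [h1]
          apply intervalIntegral.integral_congr
          intro s _
          beta_reduce
          rw [hTL, Matrix.mulVec_add, CE_mulVec π A hCE, hTAh, Matrix.mulVec_mulVec,
            Matrix.mulVec_mulVec, hsum']
        · intro t ht
          rw [hze t ht]
          congr 1
      refine ⟨u, x, hum, hub, hxc, hxe', ?_, ?_⟩
      · apply hRint.congr_ae
        filter_upwards [ae_restrict_mem measurableSet_uIoc] with s hs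
        have hs0 : 0 ≤ s := by
          rw [Set.uIoc_of_le hT] at hs
          exact hs.1.le
        rw [hRhat s (x s) (u s), hLx s hs0, hsum' s]
      · rw [hc, hFhat (x T), hLx T hT]
        congr 1
        apply intervalIntegral.integral_congr
        intro s hs
        have hs0 : 0 ≤ s := by
          rw [Set.uIcc_of_le hT] at hs
          exact hs.1
        beta_reduce
        rw [hRhat s (x s) (u s), hLx s hs0, hsum' s]
  rw [hset]
end

section
/- (Theorem 2, forward direction for suprema.) Let the partition encoded by π with matrices L, L̄ be a control equivalence for A ∈ ℝ^{N×N}, let B have unit-vector columns given by an injective driver map d, let m ≤ M componentwise, and let F, R be costs constant on the partition with induced reduced costs F̂, R̂. Then for every x0 ∈ ℝ^N and every T ≥ 0, V^sup(x0,T) = V̂^sup(L·x0,T). -/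
open Matrix MeasureTheory Set NormedSpace

section ExpTools
variable {ν : ℕ} (T : (Fin ν → ℝ) →L[ℝ] (Fin ν → ℝ))

lemma expT_cont : Continuous fun s : ℝ => exp (s • T) :=
  continuous_iff_continuousAt.2 fun s => (hasDerivAt_exp_smul_const (𝕂 := ℝ) T s).continuousAt

lemma expT_apply_cont (v : Fin ν → ℝ) : Continuous fun s : ℝ => exp (s • T) v :=
  (ContinuousLinearMap.apply ℝ (Fin ν → ℝ) v).continuous.comp (expT_cont T)

lemma expT_hasDerivAt (v : Fin ν → ℝ) (s : ℝ) :
    HasDerivAt (fun s : ℝ => exp (s • T) v) (T (exp (s • T) v)) s := by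
  have h := (hasDerivAt_exp_smul_const' (𝕂 := ℝ) T s)
  have := (ContinuousLinearMap.apply ℝ (Fin ν → ℝ) v).hasFDerivAt.comp_hasDerivAt s h
  exact this

lemma expT_mul_neg (s : ℝ) (v : Fin ν → ℝ) :
    exp (s • T) (exp ((-s) • T) v) = v := by
  have hc : Commute (s • T) ((-s) • T) := ((Commute.refl T).smul_right (-s)).smul_left s
  have h1 : exp (s • T) * exp ((-s) • T) = 1 := by
    rw [← NormedSpace.exp_add_of_commute_of_mem_ball (𝕂 := ℝ) hc
      ((NormedSpace.expSeries_radius_eq_top ℝ ((Fin ν → ℝ) →L[ℝ] (Fin ν → ℝ))).symm ▸ edist_lt_top _ _)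
      ((NormedSpace.expSeries_radius_eq_top ℝ ((Fin ν → ℝ) →L[ℝ] (Fin ν → ℝ))).symm ▸ edist_lt_top _ _)]
    have : s • T + (-s) • T = 0 := by rw [← add_smul]; simp
    rw [this, NormedSpace.exp_zero]
  calc exp (s • T) (exp ((-s) • T) v)
      = (exp (s • T) * exp ((-s) • T)) v := rfl
    _ = v := by rw [h1]; rfl

lemma expT_ftc (v : Fin ν → ℝ) (r t : ℝ) :
    (∫ s in r..t, T (exp (s • T) v)) = exp (t • T) v - exp (r • T) v :=
  intervalIntegral.integral_eq_sub_of_hasDerivAt (fun s _ => expT_hasDerivAt T v s)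
    ((T.continuous.comp (expT_apply_cont T v)).intervalIntegrable _ _)

end ExpTools

lemma sm_bdd_intervalIntegrable {ν : ℕ} {f : ℝ → Fin ν → ℝ} (hf : StronglyMeasurable f)
    {a b : ℝ} (C : ℝ) (h : ∀ s ∈ Set.uIcc a b, ‖f s‖ ≤ C) :
    IntervalIntegrable f volume a b := by
  rw [intervalIntegrable_iff]
  have hfin : IsFiniteMeasure (volume.restrict (Set.uIoc a b)) := by
    rw [Set.uIoc]; infer_instance
  exact (integrable_const C).mono' hf.aestronglyMeasurable
    ((ae_restrict_mem measurableSet_uIoc).mono fun s hs => h s (Set.uIoc_subset_uIcc hs))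

/-- Existence of a global solution to the linear ODE with bounded measurable forcing. -/
lemma exists_sol {ν : ℕ} (T : (Fin ν → ℝ) →L[ℝ] (Fin ν → ℝ)) (x0 : Fin ν → ℝ)
    (b : ℝ → Fin ν → ℝ) (hb : Measurable b) (C : ℝ) (hC : ∀ s, ‖b s‖ ≤ C) :
    ∃ x : ℝ → Fin ν → ℝ, Continuous x ∧
      ∀ t, 0 ≤ t → x t = x0 + ∫ s in (0:ℝ)..t, (T (x s) + b s) := by
  classical
  have hC0 : 0 ≤ C := le_trans (norm_nonneg _) (hC 0)
  set g : ℝ → Fin ν → ℝ := fun s => exp ((-s) • T) (b s) with hg_def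
  have happly : Continuous fun q : ((Fin ν → ℝ) →L[ℝ] (Fin ν → ℝ)) × (Fin ν → ℝ) => q.1 q.2 :=
    isBoundedBilinearMap_apply.continuous
  have hg_sm : StronglyMeasurable g :=
    happly.comp_stronglyMeasurable
      ((((expT_cont T).comp continuous_neg).stronglyMeasurable).prodMk hb.stronglyMeasurable)
  have hKex : ∀ a c : ℝ, ∃ K : ℝ, ∀ s ∈ Set.Icc a c, ‖exp (s • T)‖ ≤ K := fun a c =>
    isCompact_Icc.exists_bound_of_continuousOn (expT_cont T).continuousOn
  have hg_int : ∀ a c : ℝ, IntervalIntegrable g volume a c := by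
    intro a c
    obtain ⟨K, hK⟩ := hKex (-(a ⊔ c)) (-(a ⊓ c))
    refine sm_bdd_intervalIntegrable hg_sm (K * C) fun s hs => ?_
    rw [Set.uIcc] at hs
    have hs' : -s ∈ Set.Icc (-(a ⊔ c)) (-(a ⊓ c)) := ⟨neg_le_neg hs.2, neg_le_neg hs.1⟩
    calc ‖g s‖ ≤ ‖exp ((-s) • T)‖ * ‖b s‖ := ContinuousLinearMap.le_opNorm _ _
      _ ≤ K * C := mul_le_mul (hK _ hs') (hC s) (norm_nonneg _)
            (le_trans (norm_nonneg _) (hK _ hs'))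
  have hb_sm : StronglyMeasurable b := hb.stronglyMeasurable
  have hb_int : ∀ a c : ℝ, IntervalIntegrable b volume a c := fun a c =>
    sm_bdd_intervalIntegrable hb_sm C fun s _ => hC s
  set y : ℝ → Fin ν → ℝ := fun t => ∫ s in (0:ℝ)..t, g s with hy_def
  have hy_cont : Continuous y := intervalIntegral.continuous_primitive hg_int 0
  refine ⟨fun t => exp (t • T) (x0 + y t), ?_, ?_⟩
  · exact happly.comp ((expT_cont T).prodMk (continuous_const.add hy_cont))
  intro t ht
  set x : ℝ → Fin ν → ℝ := fun t => exp (t • T) (x0 + y t) with hx_def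
  have hx_cont : Continuous x :=
    happly.comp ((expT_cont T).prodMk (continuous_const.add hy_cont))
  -- the key Fubini identity
  have key : (∫ s in (0:ℝ)..t, T (exp (s • T) (y s)))
      = exp (t • T) (y t) - ∫ s in (0:ℝ)..t, b s := by
    set μt := volume.restrict (Set.Ioc (0:ℝ) t) with hμt_def
    haveI hμfin : IsFiniteMeasure μt := by rw [hμt_def]; infer_instance
    set h : ℝ → ℝ → Fin ν → ℝ := fun s r => T (exp (s • T) (g r)) with hh_def
    set f : ℝ → ℝ → Fin ν → ℝ := fun s r => (Set.Ioc (0:ℝ) s).indicator (h s) r with hf_def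
    have hgI : ∀ s : ℝ, 0 ≤ s → IntegrableOn g (Set.Ioc 0 s) volume := fun s hs =>
      (intervalIntegrable_iff_integrableOn_Ioc_of_le hs).1 (hg_int 0 s)
    have hbI : IntegrableOn b (Set.Ioc 0 t) volume :=
      (intervalIntegrable_iff_integrableOn_Ioc_of_le ht).1 (hb_int 0 t)
    -- step 2 : inner representation
    have step2 : ∀ s ∈ Set.Ioc (0:ℝ) t,
        T (exp (s • T) (y s)) = ∫ r, f s r ∂μt := by
      intro s hs
      have h1 : y s = ∫ r in Set.Ioc (0:ℝ) s, g r := intervalIntegral.integral_of_le hs.1.le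
      have h3 : T (exp (s • T) (y s)) = ∫ r in Set.Ioc (0:ℝ) s, h s r := by
        rw [h1]
        have hcc := ContinuousLinearMap.integral_comp_comm (T.comp (exp (s • T)))
          (μ := volume.restrict (Set.Ioc (0:ℝ) s)) (hgI s hs.1.le)
        simp only [ContinuousLinearMap.comp_apply] at hcc
        exact hcc.symm
      have h4 : (∫ r, f s r ∂μt) = ∫ r in Set.Ioc (0:ℝ) s, h s r ∂μt :=
        integral_indicator measurableSet_Ioc
      have h5 : μt.restrict (Set.Ioc (0:ℝ) s) = volume.restrict (Set.Ioc (0:ℝ) s) := by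
        rw [hμt_def, Measure.restrict_restrict measurableSet_Ioc,
          Set.inter_eq_left.2 (Set.Ioc_subset_Ioc_right hs.2)]
      rw [h3, h4, h5]
    -- step 3 : integrability on the product
    have hS : MeasurableSet {p : ℝ × ℝ | p.2 ∈ Set.Ioc (0:ℝ) p.1} := by
      have : {p : ℝ × ℝ | p.2 ∈ Set.Ioc (0:ℝ) p.1}
          = {p : ℝ × ℝ | (0:ℝ) < p.2} ∩ {p : ℝ × ℝ | p.2 ≤ p.1} := by
        ext p; simp [Set.mem_Ioc, and_comm]
      rw [this]
      exact (measurableSet_lt measurable_const measurable_snd).inter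
        (measurableSet_le measurable_snd measurable_fst)
    have hunc : Function.uncurry f
        = Set.indicator {p : ℝ × ℝ | p.2 ∈ Set.Ioc (0:ℝ) p.1} (fun p => h p.1 p.2) := by
      funext p
      simp only [Function.uncurry, hf_def, Set.indicator_apply, Set.mem_setOf_eq]
    have hsm : StronglyMeasurable (Function.uncurry f) := by
      rw [hunc]
      refine StronglyMeasurable.indicator ?_ hS
      exact (T.continuous.comp happly).comp_stronglyMeasurable
        ((((expT_cont T).comp continuous_fst).stronglyMeasurable).prodMk
          (hg_sm.comp_measurable measurable_snd))
    obtain ⟨K, hK⟩ := hKex (-t) t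
    have hKnn : 0 ≤ K := le_trans (norm_nonneg _) (hK 0 ⟨neg_nonpos.2 ht, ht⟩)
    have hgbd : ∀ r ∈ Set.Ioc (0:ℝ) t, ‖g r‖ ≤ K * C := by
      intro r hr
      have hr' : -r ∈ Set.Icc (-t) t :=
        ⟨neg_le_neg hr.2, le_trans (neg_nonpos.2 hr.1.le) ht⟩
      calc ‖g r‖ ≤ ‖exp ((-r) • T)‖ * ‖b r‖ := ContinuousLinearMap.le_opNorm _ _
        _ ≤ K * C := mul_le_mul (hK _ hr') (hC r) (norm_nonneg _) hKnn
    set D : ℝ := ‖T‖ * (K * (K * C)) with hD_def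
    have hprod : μt.prod μt = (volume.prod volume).restrict
        ((Set.Ioc (0:ℝ) t) ×ˢ (Set.Ioc (0:ℝ) t)) := Measure.prod_restrict _ _
    have hfint : Integrable (Function.uncurry f) (μt.prod μt) := by
      refine (integrable_const D).mono' hsm.aestronglyMeasurable ?_
      rw [hprod]
      filter_upwards [ae_restrict_mem (measurableSet_Ioc.prod measurableSet_Ioc)] with p hp
      rcases hp with ⟨hp1, hp2⟩
      by_cases hmem : p.2 ∈ Set.Ioc (0:ℝ) p.1
      · have : Function.uncurry f p = h p.1 p.2 :=
          Set.indicator_of_mem hmem (h p.1)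
        rw [this]
        have hKp : ‖exp (p.1 • T)‖ ≤ K := hK _ ⟨le_trans (neg_nonpos.2 ht) hp1.1.le, hp1.2⟩
        calc ‖h p.1 p.2‖ ≤ ‖T‖ * ‖exp (p.1 • T) (g p.2)‖ := T.le_opNorm _
          _ ≤ ‖T‖ * (‖exp (p.1 • T)‖ * ‖g p.2‖) := by
              exact mul_le_mul_of_nonneg_left (ContinuousLinearMap.le_opNorm _ _)
                (norm_nonneg _)
          _ ≤ D := by
              refine mul_le_mul_of_nonneg_left ?_ (norm_nonneg T)
              exact mul_le_mul hKp (hgbd _ hp2) (norm_nonneg _) hKnn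
      · have : Function.uncurry f p = 0 :=
          Set.indicator_of_notMem hmem (h p.1)
        rw [this, norm_zero, hD_def]
        positivity
    -- step 5 : inner evaluation after swap
    have step5 : ∀ r ∈ Set.Ioc (0:ℝ) t,
        (∫ s, f s r ∂μt) = exp (t • T) (g r) - b r := by
      intro r hr
      have e1 : (∫ s, f s r ∂μt) = ∫ s, (Set.Ici r).indicator (fun s => h s r) s ∂μt := by
        refine integral_congr_ae (Filter.Eventually.of_forall fun s => ?_)
        simp only [hf_def, Set.indicator_apply, Set.mem_Ioc, Set.mem_Ici]
        by_cases hrs : r ≤ s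
        · simp [hrs, hr.1]
        · simp [hrs]
      have e2 : Set.Ici r ∩ Set.Ioc (0:ℝ) t = Set.Icc r t := by
        ext s
        simp only [Set.mem_inter_iff, Set.mem_Ici, Set.mem_Ioc, Set.mem_Icc]
        exact ⟨fun ⟨a1, _, a3⟩ => ⟨a1, a3⟩, fun ⟨a1, a2⟩ => ⟨a1, lt_of_lt_of_le hr.1 a1, a2⟩⟩
      rw [e1, integral_indicator measurableSet_Ici, hμt_def,
        Measure.restrict_restrict measurableSet_Ici, e2, integral_Icc_eq_integral_Ioc,
        ← intervalIntegral.integral_of_le hr.2]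
      have := expT_ftc T (g r) r t
      rw [hh_def]
      rw [this]
      congr 1
      exact expT_mul_neg T r (b r)
    -- assemble
    calc (∫ s in (0:ℝ)..t, T (exp (s • T) (y s)))
        = ∫ s in Set.Ioc (0:ℝ) t, T (exp (s • T) (y s)) :=
          intervalIntegral.integral_of_le ht
      _ = ∫ s, (∫ r, f s r ∂μt) ∂μt := setIntegral_congr_fun measurableSet_Ioc step2
      _ = ∫ r, (∫ s, f s r ∂μt) ∂μt := integral_integral_swap hfint
      _ = ∫ r in Set.Ioc (0:ℝ) t, (exp (t • T) (g r) - b r) :=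
          setIntegral_congr_fun measurableSet_Ioc step5
      _ = (∫ r in Set.Ioc (0:ℝ) t, exp (t • T) (g r)) - ∫ r in Set.Ioc (0:ℝ) t, b r :=
          integral_sub ((exp (t • T)).integrable_comp (hgI t ht)) hbI
      _ = exp (t • T) (y t) - ∫ s in (0:ℝ)..t, b s := by
          rw [ContinuousLinearMap.integral_comp_comm _ (hgI t ht),
            show y t = ∫ r in Set.Ioc (0:ℝ) t, g r from intervalIntegral.integral_of_le ht,
            show (∫ s in (0:ℝ)..t, b s) = ∫ r in Set.Ioc (0:ℝ) t, b r from
              intervalIntegral.integral_of_le ht]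
  have hsplit : ∀ s : ℝ, T (x s) + b s
      = (T (exp (s • T) x0) + T (exp (s • T) (y s))) + b s := by
    intro s; rw [hx_def]; simp [map_add]
  have int1 : IntervalIntegrable (fun s => T (exp (s • T) x0)) volume 0 t :=
    (T.continuous.comp (expT_apply_cont T x0)).intervalIntegrable _ _
  have int2 : IntervalIntegrable (fun s => T (exp (s • T) (y s))) volume 0 t := by
    refine Continuous.intervalIntegrable ?_ _ _
    exact T.continuous.comp (happly.comp ((expT_cont T).prodMk hy_cont))
  calc x t = exp (t • T) x0 + exp (t • T) (y t) := by rw [hx_def]; simp [map_add]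
    _ = x0 + ((exp (t • T) x0 - x0) + ((exp (t • T) (y t) - ∫ s in (0:ℝ)..t, b s)
          + ∫ s in (0:ℝ)..t, b s)) := by abel
    _ = x0 + ((∫ s in (0:ℝ)..t, T (exp (s • T) x0))
          + ((∫ s in (0:ℝ)..t, T (exp (s • T) (y s))) + ∫ s in (0:ℝ)..t, b s)) := by
        rw [key]
        have h0 : exp ((0:ℝ) • T) x0 = x0 := by
          rw [zero_smul, NormedSpace.exp_zero]; rfl
        rw [expT_ftc T x0 0 t, h0]
    _ = x0 + ∫ s in (0:ℝ)..t, (T (x s) + b s) := by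
        congr 1
        have heq : (∫ s in (0:ℝ)..t, (T (x s) + b s))
            = ∫ s in (0:ℝ)..t, ((T (exp (s • T) x0) + T (exp (s • T) (y s))) + b s) :=
          intervalIntegral.integral_congr fun s _ => hsplit s
        rw [heq, intervalIntegral.integral_add (int1.add int2) (hb_int 0 t),
          intervalIntegral.integral_add int1 int2]
        abel

/-- Uniqueness for the homogeneous linear ODE in integral form. -/
lemma lin_uniq {ν : ℕ} (T : (Fin ν → ℝ) →L[ℝ] (Fin ν → ℝ)) {w : ℝ → Fin ν → ℝ}
    (hw_cont : Continuous w) (hw : ∀ t, 0 ≤ t → w t = ∫ s in (0:ℝ)..t, T (w s))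
    (b : ℝ) : ∀ t ∈ Set.Icc (0:ℝ) b, w t = 0 := by
  have hf_cont : Continuous fun s => T (w s) := T.continuous.comp hw_cont
  have hprim : ∀ t : ℝ, HasDerivAt (fun τ => ∫ s in (0:ℝ)..τ, T (w s)) (T (w t)) t :=
    fun t => (hf_cont.integral_hasStrictDerivAt 0 t).hasDerivAt
  have hw' : ∀ t ∈ Set.Ico (0:ℝ) b, HasDerivWithinAt w (T (w t)) (Set.Ici t) t := by
    intro t ht
    exact ((hprim t).hasDerivWithinAt (s := Set.Ici t)).congr
      (fun s hs => (hw s (le_trans ht.1 hs)).symm ▸ rfl) ((hw t ht.1) ▸ rfl)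
  have hzero' : ∀ t ∈ Set.Ico (0:ℝ) b,
      HasDerivWithinAt (fun _ : ℝ => (0 : Fin ν → ℝ)) (T ((fun _ : ℝ => (0 : Fin ν → ℝ)) t))
        (Set.Ici t) t := by
    intro t _
    simpa [map_zero] using (hasDerivWithinAt_const t (Set.Ici t) (0 : Fin ν → ℝ))
  have h0 : w 0 = 0 := by
    rw [hw 0 le_rfl, intervalIntegral.integral_same]
  have := ODE_solution_unique_of_mem_Icc_right
    (v := fun _ x => T x) (K := ‖T‖₊) (s := fun _ => Set.univ)
    (fun _ _ => (T.lipschitz).lipschitzOnWith)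
    hw_cont.continuousOn hw' (fun _ _ => trivial)
    continuousOn_const hzero' (fun _ _ => trivial) h0
  exact fun t ht => this ht

section Bridge

variable {N n K : ℕ}

noncomputable def matCLM {a b : ℕ} (A : Matrix (Fin a) (Fin b) ℝ) :
    (Fin b → ℝ) →L[ℝ] (Fin a → ℝ) :=
  LinearMap.toContinuousLinearMap A.mulVecLin

@[simp] lemma matCLM_apply {a b : ℕ} (A : Matrix (Fin a) (Fin b) ℝ) (v : Fin b → ℝ) :
    matCLM A v = A.mulVec v := rfl

lemma LB_entry (π : Fin N → Fin n) (d : Fin K → Fin N) (B : Matrix (Fin N) (Fin K) ℝ)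
    (hB : ∀ j l, B j l = if j = d l then 1 else 0) (i : Fin n) (l : Fin K) :
    (aggL π * B) i l = if π (d l) = i then 1 else 0 := by
  classical
  simp only [Matrix.mul_apply, aggL, hB, mul_ite, mul_one, mul_zero]
  rw [Finset.sum_ite_eq' Finset.univ (d l) fun j => if π j = i then (1:ℝ) else 0]
  simp

lemma LB_mulVec (π : Fin N → Fin n) (d : Fin K → Fin N) (B : Matrix (Fin N) (Fin K) ℝ)
    (hB : ∀ j l, B j l = if j = d l then 1 else 0) (v : Fin K → ℝ) (i : Fin n) :
    (aggL π * B).mulVec v i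
      = ∑ l ∈ Finset.univ.filter (fun l : Fin K => π (d l) = i), v l := by
  classical
  rw [Finset.sum_filter]
  simp only [Matrix.mulVec, dotProduct]
  refine Finset.sum_congr rfl fun l _ => ?_
  rw [LB_entry π d B hB i l]
  split <;> simp

lemma norm_le_of_bounds {κ : ℕ} {a b v : Fin κ → ℝ} (h : ∀ l, a l ≤ v l ∧ v l ≤ b l) :
    ‖v‖ ≤ ‖a‖ + ‖b‖ := by
  refine (pi_norm_le_iff_of_nonneg (by positivity)).2 fun l => ?_
  have ha := norm_le_pi_norm a l
  have hb := norm_le_pi_norm b l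
  rw [Real.norm_eq_abs] at ha hb ⊢
  rw [abs_le]
  constructor
  · have := abs_le.1 ha
    linarith [(h l).1, norm_nonneg b]
  · have := abs_le.1 hb
    linarith [(h l).2, norm_nonneg a]

end Bridge

section Main

variable {N n K : ℕ}

lemma hCEv {π : Fin N → Fin n} {A : Matrix (Fin N) (Fin N) ℝ}
    (hCE : aggL π * A = aggL π * A * avgL π * aggL π) (v : Fin N → ℝ) :
    (aggL π).mulVec (A.mulVec v)
      = (aggL π * A * avgL π).mulVec ((aggL π).mulVec v) := by
  conv_lhs => rw [Matrix.mulVec_mulVec, hCE]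
  rw [Matrix.mulVec_mulVec]

/-- Projecting the original dynamics through the aggregation matrix. -/
lemma push_agg {π : Fin N → Fin n} {A : Matrix (Fin N) (Fin N) ℝ}
    (hCE : aggL π * A = aggL π * A * avgL π * aggL π)
    (B : Matrix (Fin N) (Fin K) ℝ) {u : ℝ → Fin K → ℝ} {x : ℝ → Fin N → ℝ}
    (hu_meas : Measurable u) {Cu : ℝ} (hu_norm : ∀ s, ‖u s‖ ≤ Cu)
    (hx_cont : Continuous x) {x0 : Fin N → ℝ}
    (hx_eq : ∀ t : ℝ, 0 ≤ t →
      x t = x0 + ∫ s in (0:ℝ)..t, (A.mulVec (x s) + B.mulVec (u s)))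
    {t : ℝ} (ht : 0 ≤ t) :
    (aggL π).mulVec (x t) = (aggL π).mulVec x0 + ∫ s in (0:ℝ)..t,
      ((aggL π * A * avgL π).mulVec ((aggL π).mulVec (x s))
        + (aggL π * B).mulVec (u s)) := by
  have hint : IntervalIntegrable (fun s => A.mulVec (x s) + B.mulVec (u s)) volume 0 t := by
    refine IntervalIntegrable.add
      (((matCLM A).continuous.comp hx_cont).intervalIntegrable _ _) ?_
    refine sm_bdd_intervalIntegrable
      (((matCLM B).continuous.measurable).comp hu_meas).stronglyMeasurable
      (‖matCLM B‖ * Cu) fun s _ => ?_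
    calc ‖B.mulVec (u s)‖ = ‖matCLM B (u s)‖ := rfl
      _ ≤ ‖matCLM B‖ * ‖u s‖ := (matCLM B).le_opNorm _
      _ ≤ ‖matCLM B‖ * Cu := mul_le_mul_of_nonneg_left (hu_norm s) (norm_nonneg _)
  have h2 : (aggL π).mulVec (∫ s in (0:ℝ)..t, (A.mulVec (x s) + B.mulVec (u s)))
      = ∫ s in (0:ℝ)..t, (aggL π).mulVec (A.mulVec (x s) + B.mulVec (u s)) :=
    ((matCLM (aggL π)).intervalIntegral_comp_comm hint).symm
  rw [hx_eq t ht, Matrix.mulVec_add, h2]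
  congr 1
  refine intervalIntegral.integral_congr fun s _ => ?_
  rw [Matrix.mulVec_add, hCEv hCE (x s), Matrix.mulVec_mulVec, Matrix.mulVec_mulVec]

end Main

/-- Theorem 2, forward direction for suprema: under a control equivalence, the optimal (supremum) cost of the original system equals that of the reduced system. -/
theorem value_function_sup_preserved {N n K : ℕ} (π : Fin N → Fin n)
    (hπ : Function.Surjective π) (A : Matrix (Fin N) (Fin N) ℝ)
    (hCE : aggL π * A = aggL π * A * avgL π * aggL π)
    (d : Fin K → Fin N) (hd : Function.Injective d)
    (B : Matrix (Fin N) (Fin K) ℝ)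
    (hB : ∀ (j : Fin N) (l : Fin K), B j l = if j = d l then 1 else 0)
    (m M : Fin K → ℝ) (hmM : ∀ l, m l ≤ M l)
    (F : (Fin N → ℝ) → ℝ) (R : ℝ → (Fin N → ℝ) → (Fin K → ℝ) → ℝ)
    (Fhat : (Fin n → ℝ) → ℝ) (Rhat : ℝ → (Fin n → ℝ) → (Fin n → ℝ) → ℝ)
    (hFhat : ∀ x : Fin N → ℝ, F x = Fhat ((aggL π).mulVec x))
    (hRhat : ∀ (t : ℝ) (x : Fin N → ℝ) (v : Fin K → ℝ),
      R t x v = Rhat t ((aggL π).mulVec x) ((aggL π * B).mulVec v))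
    (x0 : Fin N → ℝ) (T : ℝ) (hT : 0 ≤ T) :
    sSup (costSet A B m M F R x0 T) =
      sSup (redCostSet (aggL π * A * avgL π) (redBound π d m) (redBound π d M)
        Fhat Rhat ((aggL π).mulVec x0) T) := by
  
  classical
  have hfwd : costSet A B m M F R x0 T ⊆
      redCostSet (aggL π * A * avgL π) (redBound π d m) (redBound π d M)
        Fhat Rhat ((aggL π).mulVec x0) T := by
    rintro c ⟨u, x, hu_meas, hu_bd, hx_cont, hx_eq, hR_int, rfl⟩
    have hu_norm : ∀ s, ‖u s‖ ≤ ‖m‖ + ‖M‖ := fun s => norm_le_of_bounds (hu_bd s)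
    refine ⟨fun t => (aggL π * B).mulVec (u t), fun t => (aggL π).mulVec (x t),
      ((matCLM (aggL π * B)).continuous.measurable).comp hu_meas, ?_,
      (matCLM (aggL π)).continuous.comp hx_cont, ?_, ?_, ?_⟩
    · intro t i
      simp only
      rw [LB_mulVec π d B hB]
      exact ⟨Finset.sum_le_sum fun l _ => (hu_bd t l).1,
        Finset.sum_le_sum fun l _ => (hu_bd t l).2⟩
    · intro t ht
      exact push_agg hCE B hu_meas hu_norm hx_cont hx_eq ht
    · have heq : (fun t => Rhat t ((aggL π).mulVec (x t)) ((aggL π * B).mulVec (u t)))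
          = fun t => R t (x t) (u t) := funext fun t => (hRhat t (x t) (u t)).symm
      rw [heq]; exact hR_int
    · rw [hFhat (x T)]
      congr 1
      exact intervalIntegral.integral_congr fun s _ => hRhat s (x s) (u s)
  have hbwd : redCostSet (aggL π * A * avgL π) (redBound π d m) (redBound π d M)
      Fhat Rhat ((aggL π).mulVec x0) T ⊆ costSet A B m M F R x0 T := by
    rintro c ⟨uh, zh, huh_meas, huh_bd, hzh_cont, hzh_eq, hRh_int, rfl⟩
    -- lifted control
    set θ : ℝ → Fin n → ℝ := fun t i =>
      if redBound π d m i = redBound π d M i then 0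
      else (uh t i - redBound π d m i) / (redBound π d M i - redBound π d m i) with hθ_def
    have hθ01 : ∀ t i, 0 ≤ θ t i ∧ θ t i ≤ 1 := by
      intro t i
      rw [hθ_def]
      by_cases hc : redBound π d m i = redBound π d M i
      · simp [hc]
      · have hlt : redBound π d m i < redBound π d M i :=
          lt_of_le_of_ne (Finset.sum_le_sum fun l _ => hmM l) hc
        simp only [hc, if_false]
        refine ⟨div_nonneg (sub_nonneg.2 (huh_bd t i).1) (sub_nonneg.2 hlt.le), ?_⟩
        rw [div_le_one (sub_pos.2 hlt)]
        linarith [(huh_bd t i).2]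
    set u : ℝ → Fin K → ℝ := fun t l => m l + θ t (π (d l)) * (M l - m l) with hu_def
    have hu_bd : ∀ t l, m l ≤ u t l ∧ u t l ≤ M l := by
      intro t l
      obtain ⟨h0, h1⟩ := hθ01 t (π (d l))
      have hml := hmM l
      constructor
      · show m l ≤ m l + θ t (π (d l)) * (M l - m l)
        nlinarith [mul_nonneg h0 (sub_nonneg.2 hml)]
      · show m l + θ t (π (d l)) * (M l - m l) ≤ M l
        nlinarith [mul_le_mul_of_nonneg_right h1 (sub_nonneg.2 hml)]
    have hu_meas : Measurable u := by
      rw [hu_def]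
      refine measurable_pi_iff.2 fun l => ?_
      refine measurable_const.add (Measurable.mul ?_ measurable_const)
      rw [hθ_def]
      by_cases hc : redBound π d m (π (d l)) = redBound π d M (π (d l))
      · simpa [hc] using (measurable_const : Measurable fun _ : ℝ => (0:ℝ))
      · simp only [hc, if_false]
        exact (((measurable_pi_apply _).comp huh_meas).sub measurable_const).div_const _
    have hLBu : ∀ t, (aggL π * B).mulVec (u t) = uh t := by
      intro t; funext i
      rw [LB_mulVec π d B hB]
      have hsum : (∑ l ∈ Finset.univ.filter (fun l : Fin K => π (d l) = i), u t l)
          = redBound π d m i + θ t i * (redBound π d M i - redBound π d m i) := by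
        have hcongr : ∀ l ∈ Finset.univ.filter (fun l : Fin K => π (d l) = i),
            u t l = m l + θ t i * (M l - m l) := by
          intro l hl
          show m l + θ t (π (d l)) * (M l - m l) = m l + θ t i * (M l - m l)
          rw [(Finset.mem_filter.1 hl).2]
        rw [Finset.sum_congr rfl hcongr, Finset.sum_add_distrib, ← Finset.mul_sum,
          Finset.sum_sub_distrib]
        rfl
      rw [hsum]
      by_cases hc : redBound π d m i = redBound π d M i
      · have hθ0 : θ t i = 0 := by rw [hθ_def]; simp [hc]
        have h1 : uh t i ≤ redBound π d M i := (huh_bd t i).2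
        have h2 : redBound π d m i ≤ uh t i := (huh_bd t i).1
        rw [hθ0]
        rw [← hc] at h1
        linarith
      · have hθv : θ t i = (uh t i - redBound π d m i)
            / (redBound π d M i - redBound π d m i) := by rw [hθ_def]; simp [hc]
        rw [hθv, div_mul_cancel₀ _ (sub_ne_zero.2 (Ne.symm hc))]
        ring
    have hu_norm : ∀ s, ‖u s‖ ≤ ‖m‖ + ‖M‖ := fun s => norm_le_of_bounds (hu_bd s)
    have hb_meas : Measurable fun s => B.mulVec (u s) :=
      ((matCLM B).continuous.measurable).comp hu_meas
    have hb_bd : ∀ s, ‖B.mulVec (u s)‖ ≤ ‖matCLM B‖ * (‖m‖ + ‖M‖) := by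
      intro s
      calc ‖B.mulVec (u s)‖ = ‖matCLM B (u s)‖ := rfl
        _ ≤ ‖matCLM B‖ * ‖u s‖ := (matCLM B).le_opNorm _
        _ ≤ ‖matCLM B‖ * (‖m‖ + ‖M‖) :=
            mul_le_mul_of_nonneg_left (hu_norm s) (norm_nonneg _)
    obtain ⟨x, hx_cont, hx_eq'⟩ :=
      exists_sol (matCLM A) x0 (fun s => B.mulVec (u s)) hb_meas _ hb_bd
    have hx_eq : ∀ t : ℝ, 0 ≤ t →
        x t = x0 + ∫ s in (0:ℝ)..t, (A.mulVec (x s) + B.mulVec (u s)) := by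
      intro t ht
      simpa using hx_eq' t ht
    -- identify the projection of `x` with `zh`
    set w : ℝ → Fin n → ℝ := fun t => (aggL π).mulVec (x t) - zh t with hw_def
    have hw_cont : Continuous w :=
      ((matCLM (aggL π)).continuous.comp hx_cont).sub hzh_cont
    have huh_norm : ∀ s, ‖uh s‖ ≤ ‖redBound π d m‖ + ‖redBound π d M‖ :=
      fun s => norm_le_of_bounds (huh_bd s)
    have hw_eq : ∀ t, 0 ≤ t →
        w t = ∫ s in (0:ℝ)..t, matCLM (aggL π * A * avgL π) (w s) := by
      intro t ht
      have hpush := push_agg hCE B hu_meas hu_norm hx_cont hx_eq ht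
      have hpush' : (aggL π).mulVec (x t) = (aggL π).mulVec x0 + ∫ s in (0:ℝ)..t,
          ((aggL π * A * avgL π).mulVec ((aggL π).mulVec (x s)) + uh s) := by
        rw [hpush]
        congr 1
        exact intervalIntegral.integral_congr fun s _ => by rw [hLBu s]
      have huh_int : IntervalIntegrable uh volume 0 t :=
        sm_bdd_intervalIntegrable huh_meas.stronglyMeasurable _ fun s _ => huh_norm s
      have c1 : Continuous fun s => (aggL π * A * avgL π).mulVec ((aggL π).mulVec (x s)) :=
        (matCLM (aggL π * A * avgL π)).continuous.comp
          ((matCLM (aggL π)).continuous.comp hx_cont)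
      have c2 : Continuous fun s => (aggL π * A * avgL π).mulVec (zh s) :=
        (matCLM (aggL π * A * avgL π)).continuous.comp hzh_cont
      have i1 : IntervalIntegrable
          (fun s => (aggL π * A * avgL π).mulVec ((aggL π).mulVec (x s)) + uh s)
          volume 0 t := (c1.intervalIntegrable 0 t).add huh_int
      have i2 : IntervalIntegrable
          (fun s => (aggL π * A * avgL π).mulVec (zh s) + uh s) volume 0 t :=
        (c2.intervalIntegrable 0 t).add huh_int
      rw [hw_def]
      simp only []
      rw [hpush', hzh_eq t ht, add_sub_add_left_eq_sub,
        ← intervalIntegral.integral_sub i1 i2]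
      refine intervalIntegral.integral_congr fun s _ => ?_
      rw [add_sub_add_right_eq_sub, matCLM_apply, ← Matrix.mulVec_sub]
    have hzx : ∀ t ∈ Set.Icc (0:ℝ) T, (aggL π).mulVec (x t) = zh t := by
      intro t ht
      have := lin_uniq (matCLM (aggL π * A * avgL π)) hw_cont hw_eq T t ht
      rw [hw_def] at this
      exact sub_eq_zero.1 this
    refine ⟨u, x, hu_meas, hu_bd, hx_cont, hx_eq, ?_, ?_⟩
    · rw [intervalIntegrable_iff_integrableOn_Ioc_of_le hT] at hRh_int ⊢
      refine hRh_int.congr_fun (fun s hs => ?_) measurableSet_Ioc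
      rw [hRhat s (x s) (u s), hzx s (Set.Ioc_subset_Icc_self hs), hLBu s]
    · rw [hFhat (x T), hzx T ⟨hT, le_rfl⟩]
      congr 1
      refine (intervalIntegral.integral_congr fun s hs => ?_).symm
      rw [Set.uIcc_of_le hT] at hs
      rw [hRhat s (x s) (u s), hzx s hs, hLBu s]
  exact congrArg sSup (Set.Subset.antisymm hfwd hbwd)
end

section
/- (Theorem 2, converse direction.) Let π : Fin N → Fin n encode a partition with matrices L, L̄, let A ∈ ℝ^{N×N}, let B have unit-vector columns given by an injective driver map d, and let m ≤ M componentwise. Suppose that for every pair of final and running costs F, R that are constant on the partition (with induced reduced costs F̂, R̂), every x0 ∈ ℝ^N, and every T ≥ 0, one has V^inf(x0,T) = V̂^inf(L·x0,T) and V^sup(x0,T) = V̂^sup(L·x0,T). Then the partition is a control equivalence for A, i.e., L·A = L·A·L̄·L. -/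
open Matrix MeasureTheory

section AuxODE

variable {ν : ℕ}

/-- A priori bound on trajectories near `x0`. -/
lemma apriori_bound (Acl : (Fin ν → ℝ) →L[ℝ] (Fin ν → ℝ)) (x0 : Fin ν → ℝ) (Cg : ℝ)
    (g : ℝ → Fin ν → ℝ) (x : ℝ → Fin ν → ℝ)
    (hgb : ∀ s, ‖g s‖ ≤ Cg) (hx : Continuous x)
    (heq : ∀ t, 0 ≤ t → x t = x0 + ∫ s in (0:ℝ)..t, (Acl (x s) + g s))
    {T : ℝ} (hT : 0 ≤ T) (hsmall : T * ‖Acl‖ ≤ 1/2) :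
    ∀ s, 0 ≤ s → s ≤ T → ‖x s - x0‖ ≤ 2 * T * (‖Acl‖ * ‖x0‖ + Cg) := by
  have hCg : 0 ≤ Cg := le_trans (norm_nonneg (g 0)) (hgb 0)
  obtain ⟨sm, hsm, hmax⟩ := isCompact_Icc.exists_isMaxOn (Set.nonempty_Icc.2 hT)
    ((hx.sub continuous_const).norm.continuousOn :
      ContinuousOn (fun s => ‖x s - x0‖) (Set.Icc 0 T))
  set D := ‖x sm - x0‖ with hD
  have hD0 : 0 ≤ D := norm_nonneg _
  have hxs : x sm - x0 = ∫ s in (0:ℝ)..sm, (Acl (x s) + g s) := by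
    rw [heq sm hsm.1]; abel
  have hbnd : D ≤ (‖Acl‖ * (‖x0‖ + D) + Cg) * |sm - 0| := by
    conv_lhs => rw [hD, hxs]
    apply intervalIntegral.norm_integral_le_of_norm_le_const
    intro r hr
    rw [Set.uIoc_of_le hsm.1] at hr
    have hrI : r ∈ Set.Icc 0 T := ⟨hr.1.le, hr.2.trans hsm.2⟩
    have h1 : ‖x r - x0‖ ≤ D := hmax hrI
    have h2 : ‖x r‖ ≤ ‖x0‖ + D := by
      calc ‖x r‖ = ‖x0 + (x r - x0)‖ := by rw [add_sub_cancel]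
        _ ≤ ‖x0‖ + ‖x r - x0‖ := norm_add_le _ _
        _ ≤ ‖x0‖ + D := by linarith
    calc ‖Acl (x r) + g r‖ ≤ ‖Acl (x r)‖ + ‖g r‖ := norm_add_le _ _
      _ ≤ ‖Acl‖ * ‖x r‖ + Cg := add_le_add (Acl.le_opNorm _) (hgb r)
      _ ≤ ‖Acl‖ * (‖x0‖ + D) + Cg := by
          have := mul_le_mul_of_nonneg_left h2 (norm_nonneg Acl); linarith
  have habs : |sm - 0| ≤ T := by
    rw [sub_zero, abs_of_nonneg hsm.1]; exact hsm.2
  have hDle : D ≤ 2 * T * (‖Acl‖ * ‖x0‖ + Cg) := by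
    have hC0 : 0 ≤ ‖Acl‖ * (‖x0‖ + D) + Cg := by positivity
    have h3 : D ≤ (‖Acl‖ * (‖x0‖ + D) + Cg) * T :=
      hbnd.trans (mul_le_mul_of_nonneg_left habs hC0)
    nlinarith [norm_nonneg Acl, norm_nonneg x0, mul_nonneg (mul_nonneg hT (norm_nonneg Acl)) hD0]
  intro s hs0 hsT
  exact le_trans (hmax ⟨hs0, hsT⟩) hDle

/-- Componentwise first-order estimate for trajectories. -/
lemma comp_est (Acl : (Fin ν → ℝ) →L[ℝ] (Fin ν → ℝ)) (x0 : Fin ν → ℝ) (Cg : ℝ)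
    (g : ℝ → Fin ν → ℝ) (x : ℝ → Fin ν → ℝ) (hgm : Measurable g)
    (hgb : ∀ s, ‖g s‖ ≤ Cg) (hx : Continuous x)
    (heq : ∀ t, 0 ≤ t → x t = x0 + ∫ s in (0:ℝ)..t, (Acl (x s) + g s))
    {T : ℝ} (hT : 0 ≤ T) (hsmall : T * ‖Acl‖ ≤ 1/2)
    (φ : (Fin ν → ℝ) →L[ℝ] ℝ) (lo hi : ℝ)
    (hlo : ∀ s, lo ≤ φ (g s)) (hhi : ∀ s, φ (g s) ≤ hi) :
    φ (x T) ≤ φ x0 + T * φ (Acl x0) + T * hi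
        + ‖φ‖ * (‖Acl‖ * (2 * T * (‖Acl‖ * ‖x0‖ + Cg)) * T)
      ∧ φ x0 + T * φ (Acl x0) + T * lo
        - ‖φ‖ * (‖Acl‖ * (2 * T * (‖Acl‖ * ‖x0‖ + Cg)) * T) ≤ φ (x T) := by
  have hbnd := apriori_bound Acl x0 Cg g x hgb hx heq hT hsmall
  have hIg : IntervalIntegrable g volume 0 T := by
    refine (intervalIntegrable_const (c := Cg)).mono_fun'
      hgm.aestronglyMeasurable.restrict ?_
    exact Filter.Eventually.of_forall hgb
  have hIax : IntervalIntegrable (fun s => Acl (x s)) volume 0 T :=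
    (Acl.continuous.comp hx).intervalIntegrable 0 T
  have h1 : x T - x0 = (∫ s in (0:ℝ)..T, Acl (x s)) + ∫ s in (0:ℝ)..T, g s := by
    rw [heq T hT, ← intervalIntegral.integral_add hIax hIg]; abel
  have hconst : (∫ _ in (0:ℝ)..T, Acl x0) = T • Acl x0 := by
    rw [intervalIntegral.integral_const, sub_zero]
  have h2 : x T - x0 - T • Acl x0 - (∫ s in (0:ℝ)..T, g s)
      = ∫ s in (0:ℝ)..T, (Acl (x s) - Acl x0) := by
    rw [intervalIntegral.integral_sub hIax intervalIntegrable_const, hconst, h1]; abel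
  have herr : ‖x T - x0 - T • Acl x0 - (∫ s in (0:ℝ)..T, g s)‖
      ≤ (‖Acl‖ * (2 * T * (‖Acl‖ * ‖x0‖ + Cg))) * |T - 0| := by
    rw [h2]
    apply intervalIntegral.norm_integral_le_of_norm_le_const
    intro r hr
    rw [Set.uIoc_of_le hT] at hr
    calc ‖Acl (x r) - Acl x0‖ = ‖Acl (x r - x0)‖ := by rw [map_sub]
      _ ≤ ‖Acl‖ * ‖x r - x0‖ := Acl.le_opNorm _
      _ ≤ ‖Acl‖ * (2 * T * (‖Acl‖ * ‖x0‖ + Cg)) :=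
          mul_le_mul_of_nonneg_left (hbnd r hr.1.le hr.2) (norm_nonneg _)
  rw [sub_zero, abs_of_nonneg hT] at herr
  have hphi : |φ (x T) - φ x0 - T * φ (Acl x0) - ∫ s in (0:ℝ)..T, φ (g s)|
      ≤ ‖φ‖ * (‖Acl‖ * (2 * T * (‖Acl‖ * ‖x0‖ + Cg)) * T) := by
    have heqφ : φ (x T) - φ x0 - T * φ (Acl x0) - (∫ s in (0:ℝ)..T, φ (g s))
        = φ (x T - x0 - T • Acl x0 - ∫ s in (0:ℝ)..T, g s) := by
      rw [map_sub, map_sub, map_sub, ContinuousLinearMap.map_smul,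
        φ.intervalIntegral_comp_comm hIg]
      simp [smul_eq_mul]
    rw [heqφ]
    calc |φ _| ≤ ‖φ‖ * ‖x T - x0 - T • Acl x0 - ∫ s in (0:ℝ)..T, g s‖ := φ.le_opNorm _
      _ ≤ ‖φ‖ * (‖Acl‖ * (2 * T * (‖Acl‖ * ‖x0‖ + Cg)) * T) := by
          apply mul_le_mul_of_nonneg_left _ (norm_nonneg φ)
          calc _ ≤ _ := herr
            _ = _ := by ring
  have hIφg : IntervalIntegrable (fun s => φ (g s)) volume 0 T := by
    refine (intervalIntegrable_const (c := ‖φ‖ * Cg)).mono_fun'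
      ((φ.continuous.measurable.comp hgm)).aestronglyMeasurable.restrict ?_
    refine Filter.Eventually.of_forall fun s => ?_
    calc ‖φ (g s)‖ ≤ ‖φ‖ * ‖g s‖ := φ.le_opNorm _
      _ ≤ ‖φ‖ * Cg := mul_le_mul_of_nonneg_left (hgb s) (norm_nonneg φ)
  have hIlo : T * lo ≤ ∫ s in (0:ℝ)..T, φ (g s) := by
    have := intervalIntegral.integral_mono_on (f := fun _ => lo) (g := fun s => φ (g s))
      hT intervalIntegrable_const hIφg (fun s _ => hlo s)
    rwa [intervalIntegral.integral_const, sub_zero, smul_eq_mul] at this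
  have hIhi : (∫ s in (0:ℝ)..T, φ (g s)) ≤ T * hi := by
    have := intervalIntegral.integral_mono_on (f := fun s => φ (g s)) (g := fun _ => hi)
      hT hIφg intervalIntegrable_const (fun s _ => hhi s)
    rwa [intervalIntegral.integral_const, sub_zero, smul_eq_mul] at this
  have habs := abs_le.1 hphi
  constructor <;> linarith [habs.1, habs.2]

lemma exp_apply_hasDerivAt (a : (Fin ν → ℝ) →L[ℝ] (Fin ν → ℝ)) (v : Fin ν → ℝ) (t : ℝ) :
    HasDerivAt (fun s => NormedSpace.exp (s • a) v) (a (NormedSpace.exp (t • a) v)) t := by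
  have h := (hasDerivAt_exp_smul_const' (𝕂 := ℝ) a t).clm_apply (hasDerivAt_const t v)
  simpa using h

/-- Existence of a global trajectory for the linear ODE with constant control. -/
lemma exists_const_traj (Ahat : Matrix (Fin ν) (Fin ν) ℝ) (z0 b : Fin ν → ℝ) :
    ∃ z : ℝ → Fin ν → ℝ, Continuous z ∧
      (∀ t : ℝ, 0 ≤ t → z t = z0 + ∫ s in (0:ℝ)..t, (Ahat.mulVec (z s) + b)) := by
  set a : (Fin ν → ℝ) →L[ℝ] (Fin ν → ℝ) := LinearMap.toContinuousLinearMap (Matrix.mulVecLin Ahat)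
    with ha
  have haeq : ∀ v, a v = Ahat.mulVec v := fun v => by simp [ha]
  set e : ℝ → ((Fin ν → ℝ) →L[ℝ] (Fin ν → ℝ)) := fun t => NormedSpace.exp (t • a) with he
  have hec : Continuous e := (continuous_iff_continuousAt.2 fun y => (NormedSpace.exp_analytic (𝕂 := ℝ) y).continuousAt).comp (continuous_id.smul continuous_const)
  have hfb : Continuous (fun r => e r b) := hec.clm_apply continuous_const
  set z : ℝ → Fin ν → ℝ := fun t => e t z0 + ∫ r in (0:ℝ)..t, e r b with hz
  have hz0 : z 0 = z0 := by
    simp [hz, he, NormedSpace.exp_zero]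
  have hderiv : ∀ t, HasDerivAt z (a (z t) + b) t := by
    intro t
    have h1 : HasDerivAt (fun s => e s z0) (a (e t z0)) t := exp_apply_hasDerivAt a z0 t
    have h2 : HasDerivAt (fun s => ∫ r in (0:ℝ)..s, e r b) (e t b) t :=
      intervalIntegral.integral_hasDerivAt_right (hfb.intervalIntegrable 0 t)
        (hfb.stronglyMeasurableAtFilter volume (nhds t)) hfb.continuousAt
    have h3 := h1.add h2
    have hkey : e t b = a (∫ r in (0:ℝ)..t, e r b) + b := by
      have hftc : (∫ r in (0:ℝ)..t, a (e r b)) = e t b - e 0 b :=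
        intervalIntegral.integral_eq_sub_of_hasDerivAt
          (fun r _ => exp_apply_hasDerivAt a b r)
          ((a.continuous.comp hfb).intervalIntegrable 0 t)
      have hcomm : a (∫ r in (0:ℝ)..t, e r b) = ∫ r in (0:ℝ)..t, a (e r b) :=
        (a.intervalIntegral_comp_comm (hfb.intervalIntegrable 0 t)).symm
      have he0 : e 0 b = b := by simp [he, NormedSpace.exp_zero]
      rw [hcomm, hftc, he0]; abel
    have heq2 : a (e t z0) + e t b = a (z t) + b := by
      rw [hkey, hz]; simp only [map_add]; abel
    rwa [heq2] at h3
  have hzc : Continuous z := continuous_iff_continuousAt.2 fun t => (hderiv t).continuousAt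
  refine ⟨z, hzc, fun t ht => ?_⟩
  have hInt : IntervalIntegrable (fun s => a (z s) + b) volume 0 t :=
    ((a.continuous.comp hzc).add continuous_const).intervalIntegrable 0 t
  have hftc2 : (∫ s in (0:ℝ)..t, (a (z s) + b)) = z t - z 0 :=
    intervalIntegral.integral_eq_sub_of_hasDerivAt (fun s _ => hderiv s) hInt
  have hee : (fun s => Ahat.mulVec (z s) + b) = fun s => a (z s) + b := by
    funext s; rw [haeq]
  rw [hee, hftc2, hz0]; abel

end AuxODE

section Alg
variable {N n K : ℕ}

lemma aggLB_mulVec (π : Fin N → Fin n) (d : Fin K → Fin N)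
    (B : Matrix (Fin N) (Fin K) ℝ)
    (hB : ∀ (j : Fin N) (l : Fin K), B j l = if j = d l then 1 else 0)
    (v : Fin K → ℝ) (i : Fin n) :
    ((aggL π * B).mulVec v) i = ∑ l ∈ Finset.univ.filter (fun l : Fin K => π (d l) = i), v l := by
  have hentry : ∀ l, (aggL π * B) i l = if π (d l) = i then 1 else 0 := by
    intro l
    simp only [Matrix.mul_apply, aggL, hB]
    rw [Finset.sum_eq_single (d l)]
    · simp
    · intro j _ hj; simp [hj]
    · simp
  simp only [Matrix.mulVec, dotProduct, hentry]
  rw [Finset.sum_filter]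
  exact Finset.sum_congr rfl fun l _ => by split <;> simp

lemma aggLB_bounds (π : Fin N → Fin n) (d : Fin K → Fin N)
    (B : Matrix (Fin N) (Fin K) ℝ)
    (hB : ∀ (j : Fin N) (l : Fin K), B j l = if j = d l then 1 else 0)
    (m M v : Fin K → ℝ) (hv : ∀ l, m l ≤ v l ∧ v l ≤ M l) (i : Fin n) :
    redBound π d m i ≤ ((aggL π * B).mulVec v) i ∧
      ((aggL π * B).mulVec v) i ≤ redBound π d M i := by
  rw [aggLB_mulVec π d B hB]
  exact ⟨Finset.sum_le_sum fun l _ => (hv l).1, Finset.sum_le_sum fun l _ => (hv l).2⟩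

lemma Bu_norm_bound (d : Fin K → Fin N) (B : Matrix (Fin N) (Fin K) ℝ)
    (hB : ∀ (j : Fin N) (l : Fin K), B j l = if j = d l then 1 else 0)
    (m M v : Fin K → ℝ) (hv : ∀ l, m l ≤ v l ∧ v l ≤ M l) :
    ‖B.mulVec v‖ ≤ ∑ l, (|m l| + |M l|) := by
  have habs : ∀ l, |v l| ≤ |m l| + |M l| := by
    intro l
    rcases hv l with ⟨h1, h2⟩
    rw [abs_le]
    constructor
    · calc -(|m l| + |M l|) ≤ -|m l| := by nlinarith [abs_nonneg (M l)]
        _ ≤ m l := neg_abs_le _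
        _ ≤ v l := h1
    · calc v l ≤ M l := h2
        _ ≤ |M l| := le_abs_self _
        _ ≤ |m l| + |M l| := by nlinarith [abs_nonneg (m l)]
  rw [pi_norm_le_iff_of_nonneg (by positivity)]
  intro j
  rw [Real.norm_eq_abs]
  calc |B.mulVec v j| = |∑ l, B j l * v l| := rfl
    _ ≤ ∑ l, |B j l * v l| := Finset.abs_sum_le_sum_abs _ _
    _ ≤ ∑ l, (|m l| + |M l|) := by
        apply Finset.sum_le_sum
        intro l _
        rw [abs_mul, hB]
        split
        · simpa using habs l
        · simp [abs_nonneg, add_nonneg (abs_nonneg (m l)) (abs_nonneg (M l))]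

lemma one_mem_of_sSup_eq_one {S : Set ℝ} (hsub : ∀ c ∈ S, c = 0 ∨ c = 1) (hS : sSup S = 1) :
    (1 : ℝ) ∈ S := by
  by_contra h
  have hzero : ∀ c ∈ S, c = 0 := by
    intro c hc
    rcases hsub c hc with h0 | h1
    · exact h0
    · exact absurd (h1 ▸ hc) h
  have hle : sSup S ≤ 0 := by
    rcases S.eq_empty_or_nonempty with rfl | hne
    · simp [Real.sSup_empty]
    · exact csSup_le hne fun c hc => le_of_eq (hzero c hc)
  linarith

lemma half_aux {a T : ℝ} (ha : 0 ≤ a) (hT : T ≤ 1 / (2 * (a + 1))) : T * a ≤ 1 / 2 := by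
  have h1 : T * a ≤ (1 / (2 * (a + 1))) * a := mul_le_mul_of_nonneg_right hT ha
  have h2 : (1 / (2 * (a + 1))) * a ≤ 1 / 2 := by
    rw [div_mul_eq_mul_div, div_le_div_iff₀ (by positivity) (by norm_num)]
    nlinarith
  linarith

end Alg

set_option maxHeartbeats 1000000 in
lemma step_ineq {N n K : ℕ} (π : Fin N → Fin n) (A : Matrix (Fin N) (Fin N) ℝ)
    (d : Fin K → Fin N) (B : Matrix (Fin N) (Fin K) ℝ)
    (hB : ∀ (j : Fin N) (l : Fin K), B j l = if j = d l then 1 else 0)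
    (m M : Fin K → ℝ)
    (hval : ∀ (F : (Fin N → ℝ) → ℝ) (R : ℝ → (Fin N → ℝ) → (Fin K → ℝ) → ℝ)
      (Fhat : (Fin n → ℝ) → ℝ) (Rhat : ℝ → (Fin n → ℝ) → (Fin n → ℝ) → ℝ),
      (∀ x : Fin N → ℝ, F x = Fhat ((aggL π).mulVec x)) →
      (∀ (t : ℝ) (x : Fin N → ℝ) (v : Fin K → ℝ),
        R t x v = Rhat t ((aggL π).mulVec x) ((aggL π * B).mulVec v)) →
      ∀ (x0 : Fin N → ℝ) (T : ℝ), 0 ≤ T →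
        sInf (costSet A B m M F R x0 T) =
          sInf (redCostSet (aggL π * A * avgL π) (redBound π d m) (redBound π d M)
            Fhat Rhat ((aggL π).mulVec x0) T) ∧
        sSup (costSet A B m M F R x0 T) =
          sSup (redCostSet (aggL π * A * avgL π) (redBound π d m) (redBound π d M)
            Fhat Rhat ((aggL π).mulVec x0) T)) 
    (x0 : Fin N → ℝ) (i : Fin n) (b : Fin n → ℝ)
    (hb : ∀ i', redBound π d m i' ≤ b i' ∧ b i' ≤ redBound π d M i')
    (ε : ℝ) (hε : 0 < ε) :
      ((aggL π * A).mulVec x0) i + redBound π d m i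
          ≤ ((aggL π * A * avgL π).mulVec ((aggL π).mulVec x0)) i + b i + ε ∧
        ((aggL π * A * avgL π).mulVec ((aggL π).mulVec x0)) i + b i
          ≤ ((aggL π * A).mulVec x0) i + redBound π d M i + ε := by
  classical
  obtain ⟨z, hzc, hzeq⟩ := exists_const_traj (aggL π * A * avgL π) ((aggL π).mulVec x0) b
  obtain ⟨Acl, hAcl⟩ : ∃ Acl : (Fin N → ℝ) →L[ℝ] (Fin N → ℝ),
      Acl = LinearMap.toContinuousLinearMap (Matrix.mulVecLin A) := ⟨_, rfl⟩
  obtain ⟨Ahcl, hAhcl⟩ : ∃ Ahcl : (Fin n → ℝ) →L[ℝ] (Fin n → ℝ),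
      Ahcl = LinearMap.toContinuousLinearMap (Matrix.mulVecLin (aggL π * A * avgL π)) :=
    ⟨_, rfl⟩
  obtain ⟨φ, hφ⟩ : ∃ φ : (Fin N → ℝ) →L[ℝ] ℝ,
      φ = (ContinuousLinearMap.proj i).comp
        (LinearMap.toContinuousLinearMap (Matrix.mulVecLin (aggL π))) := ⟨_, rfl⟩
  obtain ⟨ψ, hψ⟩ : ∃ ψ : (Fin n → ℝ) →L[ℝ] ℝ, ψ = ContinuousLinearMap.proj i := ⟨_, rfl⟩
  have hAclv : ∀ v, Acl v = A.mulVec v := fun v => by simp [hAcl]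
  have hAhclv : ∀ v, Ahcl v = (aggL π * A * avgL π).mulVec v := fun v => by
    simp [hAhcl, Matrix.mul_assoc]
  have hφv : ∀ w, φ w = ((aggL π).mulVec w) i := fun w => by simp [hφ]
  have hψv : ∀ w, ψ w = w i := fun w => by simp [hψ]
  obtain ⟨Cu, hCu⟩ : ∃ Cu : ℝ, Cu = ∑ l, (|m l| + |M l|) := ⟨_, rfl⟩
  have hCu0 : 0 ≤ Cu := by rw [hCu]; positivity
  obtain ⟨CN, hCN⟩ : ∃ CN : ℝ, CN = ‖φ‖ * (‖Acl‖ * (2 * (‖Acl‖ * ‖x0‖ + Cu))) := ⟨_, rfl⟩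
  obtain ⟨Cn, hCn⟩ : ∃ Cn : ℝ,
      Cn = ‖ψ‖ * (‖Ahcl‖ * (2 * (‖Ahcl‖ * ‖(aggL π).mulVec x0‖ + ‖b‖))) := ⟨_, rfl⟩
  have hCN0 : 0 ≤ CN := by rw [hCN]; positivity
  have hCn0 : 0 ≤ Cn := by rw [hCn]; positivity
  obtain ⟨T, hTdef⟩ : ∃ T : ℝ,
      T = min (min (1/(2*(‖Acl‖+1))) (1/(2*(‖Ahcl‖+1)))) (ε/(CN + Cn + 1)) := ⟨_, rfl⟩
  have hT0 : 0 < T := by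
    rw [hTdef]
    exact lt_min (lt_min (by positivity) (by positivity)) (div_pos hε (by linarith))
  have hTA : T * ‖Acl‖ ≤ 1/2 := by
    refine half_aux (norm_nonneg _) ?_
    rw [hTdef]; exact le_trans (min_le_left _ _) (min_le_left _ _)
  have hTAh : T * ‖Ahcl‖ ≤ 1/2 := by
    refine half_aux (norm_nonneg _) ?_
    rw [hTdef]; exact le_trans (min_le_left _ _) (min_le_right _ _)
  have hTε : T * (CN + Cn) ≤ ε := by
    have h1 : T ≤ ε/(CN + Cn + 1) := by rw [hTdef]; exact min_le_right _ _
    have h2 : T * (CN + Cn) ≤ (ε/(CN + Cn + 1)) * (CN + Cn) :=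
      mul_le_mul_of_nonneg_right h1 (by linarith)
    have h3 : (ε/(CN + Cn + 1)) * (CN + Cn) ≤ ε := by
      rw [div_mul_eq_mul_div, div_le_iff₀ (by linarith : (0:ℝ) < CN + Cn + 1)]
      nlinarith [hε.le]
    linarith
  -- indicator costs
  set Fhat : (Fin n → ℝ) → ℝ := fun w => if w = z T then 1 else 0 with hFhat
  obtain ⟨-, hsup⟩ := hval (fun x => Fhat ((aggL π).mulVec x)) (fun _ _ _ => (0:ℝ))
    Fhat (fun _ _ _ => (0:ℝ)) (fun x => rfl) (fun t x v => rfl) x0 T hT0.le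
  have hmem : (1:ℝ) ∈ redCostSet (aggL π * A * avgL π) (redBound π d m) (redBound π d M)
      Fhat (fun _ _ _ => (0:ℝ)) ((aggL π).mulVec x0) T := by
    refine ⟨fun _ => b, z, measurable_const, fun t i' => ⟨(hb i').1, (hb i').2⟩, hzc,
      hzeq, ?_, ?_⟩
    · exact intervalIntegrable_const
    · simp [hFhat]
  have hbdd : ∀ c ∈ redCostSet (aggL π * A * avgL π) (redBound π d m) (redBound π d M)
      Fhat (fun _ _ _ => (0:ℝ)) ((aggL π).mulVec x0) T, c ≤ 1 := by
    rintro c ⟨uh, zh, -, -, -, -, -, hc⟩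
    rw [hc]
    simp only [intervalIntegral.integral_zero, add_zero, hFhat]
    split <;> norm_num
  have hsupred : sSup (redCostSet (aggL π * A * avgL π) (redBound π d m) (redBound π d M)
      Fhat (fun _ _ _ => (0:ℝ)) ((aggL π).mulVec x0) T) = 1 :=
    le_antisymm (csSup_le ⟨1, hmem⟩ hbdd) (le_csSup ⟨1, hbdd⟩ hmem)
  rw [hsupred] at hsup
  have hcsub : ∀ c ∈ costSet A B m M (fun x => Fhat ((aggL π).mulVec x))
      (fun _ _ _ => (0:ℝ)) x0 T, c = 0 ∨ c = 1 := by
    rintro c ⟨u, x, -, -, -, -, -, hc⟩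
    rw [hc]
    simp only [intervalIntegral.integral_zero, add_zero, hFhat]
    split
    · right; rfl
    · left; rfl
  obtain ⟨u, x, hu, hub, hxc, hxeq, -, hc⟩ := one_mem_of_sSup_eq_one hcsub hsup
  have hmatch : (aggL π).mulVec (x T) = z T := by
    by_contra hne
    rw [hFhat] at hc
    simp only [intervalIntegral.integral_zero, add_zero, hne, if_false] at hc
    exact one_ne_zero hc
  -- CLM forms of the integral equations
  have hxeq' : ∀ t, 0 ≤ t → x t = x0 + ∫ s in (0:ℝ)..t, (Acl (x s) + B.mulVec (u s)) := by
    intro t ht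
    rw [hxeq t ht]
    congr 1
    apply intervalIntegral.integral_congr
    intro s _
    simp [hAclv]
  have hzeq' : ∀ t, 0 ≤ t →
      z t = (aggL π).mulVec x0 + ∫ s in (0:ℝ)..t, (Ahcl (z s) + (fun _ => b) s) := by
    intro t ht
    rw [hzeq t ht]
    congr 1
    apply intervalIntegral.integral_congr
    intro s _
    simp [hAhclv]
  -- measurability and bounds for the original control term
  have hgm : Measurable (fun s => B.mulVec (u s)) := by
    have hcB : Continuous (fun v : Fin K → ℝ => B.mulVec v) := by
      have := (LinearMap.toContinuousLinearMap (Matrix.mulVecLin B)).continuous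
      exact this
    exact hcB.measurable.comp hu
  have hgb : ∀ s, ‖B.mulVec (u s)‖ ≤ Cu := fun s => by
    rw [hCu]; exact Bu_norm_bound d B hB m M (u s) (hub s)
  have hglo : ∀ s, redBound π d m i ≤ φ (B.mulVec (u s)) := by
    intro s
    rw [hφv, Matrix.mulVec_mulVec]
    exact (aggLB_bounds π d B hB m M (u s) (hub s) i).1
  have hghi : ∀ s, φ (B.mulVec (u s)) ≤ redBound π d M i := by
    intro s
    rw [hφv, Matrix.mulVec_mulVec]
    exact (aggLB_bounds π d B hB m M (u s) (hub s) i).2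
  obtain ⟨hOup, hOlo⟩ := comp_est Acl x0 Cu (fun s => B.mulVec (u s)) x hgm hgb hxc hxeq'
    hT0.le hTA φ (redBound π d m i) (redBound π d M i) hglo hghi
  obtain ⟨hRup, hRlo⟩ := comp_est Ahcl ((aggL π).mulVec x0) ‖b‖ (fun _ => b) z
    measurable_const (fun s => le_refl _) hzc hzeq' hT0.le hTAh ψ (b i) (b i)
    (fun s => le_of_eq (hψv b).symm) (fun s => le_of_eq (hψv b))
  -- bridging equalities
  have hb1 : φ (x T) = ψ (z T) := by rw [hφv, hψv, hmatch]
  have hb2 : φ x0 = ψ ((aggL π).mulVec x0) := by rw [hφv, hψv]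
  have hb3 : φ (Acl x0) = ((aggL π * A).mulVec x0) i := by
    rw [hφv, hAclv, Matrix.mulVec_mulVec]
  have hb4 : ψ (Ahcl ((aggL π).mulVec x0))
      = ((aggL π * A * avgL π).mulVec ((aggL π).mulVec x0)) i := by
    rw [hψv, hAhclv]
  -- error bound
  have hEbound : ‖φ‖ * (‖Acl‖ * (2 * T * (‖Acl‖ * ‖x0‖ + Cu)) * T)
      + ‖ψ‖ * (‖Ahcl‖ * (2 * T * (‖Ahcl‖ * ‖(aggL π).mulVec x0‖ + ‖b‖)) * T) ≤ T * ε := by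
    have h1 : ‖φ‖ * (‖Acl‖ * (2 * T * (‖Acl‖ * ‖x0‖ + Cu)) * T) = T * (T * CN) := by
      rw [hCN]; ring
    have h2 : ‖ψ‖ * (‖Ahcl‖ * (2 * T * (‖Ahcl‖ * ‖(aggL π).mulVec x0‖ + ‖b‖)) * T)
        = T * (T * Cn) := by
      rw [hCn]; ring
    have h3 := mul_le_mul_of_nonneg_left hTε hT0.le
    calc ‖φ‖ * (‖Acl‖ * (2 * T * (‖Acl‖ * ‖x0‖ + Cu)) * T)
        + ‖ψ‖ * (‖Ahcl‖ * (2 * T * (‖Ahcl‖ * ‖(aggL π).mulVec x0‖ + ‖b‖)) * T)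
        = T * (T * (CN + Cn)) := by rw [h1, h2]; ring
      _ ≤ T * ε := h3
  rw [hb1, hb2, hb3] at hOup hOlo
  rw [hb4] at hRup hRlo
  constructor
  · have h5 : T * (((aggL π * A).mulVec x0) i + redBound π d m i)
        ≤ T * (((aggL π * A * avgL π).mulVec ((aggL π).mulVec x0)) i + b i + ε) := by
      nlinarith [hOlo, hRup, hEbound]
    exact le_of_mul_le_mul_left h5 hT0
  · have h5 : T * (((aggL π * A * avgL π).mulVec ((aggL π).mulVec x0)) i + b i)
        ≤ T * (((aggL π * A).mulVec x0) i + redBound π d M i + ε) := by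
      nlinarith [hOup, hRlo, hEbound]
    exact le_of_mul_le_mul_left h5 hT0

/-- Theorem 2, converse direction: if for every pair of final and running costs that are
constant on the partition (with induced reduced costs) the optimal costs of the original
and reduced systems agree (both infima and suprema, for all initial states and horizons),
then the partition is a control equivalence for `A`. -/
theorem controlEquivalence_of_value_functions_preserved {N n K : ℕ} (π : Fin N → Fin n)
    (hπ : Function.Surjective π) (A : Matrix (Fin N) (Fin N) ℝ)
    (d : Fin K → Fin N) (hd : Function.Injective d)
    (B : Matrix (Fin N) (Fin K) ℝ)
    (hB : ∀ (j : Fin N) (l : Fin K), B j l = if j = d l then 1 else 0)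
    (m M : Fin K → ℝ) (hmM : ∀ l, m l ≤ M l)
    (hval : ∀ (F : (Fin N → ℝ) → ℝ) (R : ℝ → (Fin N → ℝ) → (Fin K → ℝ) → ℝ)
      (Fhat : (Fin n → ℝ) → ℝ) (Rhat : ℝ → (Fin n → ℝ) → (Fin n → ℝ) → ℝ),
      (∀ x : Fin N → ℝ, F x = Fhat ((aggL π).mulVec x)) →
      (∀ (t : ℝ) (x : Fin N → ℝ) (v : Fin K → ℝ),
        R t x v = Rhat t ((aggL π).mulVec x) ((aggL π * B).mulVec v)) →
      ∀ (x0 : Fin N → ℝ) (T : ℝ), 0 ≤ T →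
        sInf (costSet A B m M F R x0 T) =
          sInf (redCostSet (aggL π * A * avgL π) (redBound π d m) (redBound π d M)
            Fhat Rhat ((aggL π).mulVec x0) T) ∧
        sSup (costSet A B m M F R x0 T) =
          sSup (redCostSet (aggL π * A * avgL π) (redBound π d m) (redBound π d M)
            Fhat Rhat ((aggL π).mulVec x0) T)) :
    aggL π * A = aggL π * A * avgL π * aggL π := by
  classical
  have step := fun (x0 : Fin N → ℝ) (i : Fin n) (b : Fin n → ℝ) hb ε hε =>
    step_ineq π A d B hB m M hval x0 i b hb ε hε
  -- conclude pointwise equality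
  have main : ∀ (x0 : Fin N → ℝ) (i : Fin n),
      ((aggL π * A).mulVec x0) i = ((aggL π * A * avgL π * aggL π).mulVec x0) i := by
    intro x0 i
    have hQ : ((aggL π * A * avgL π * aggL π).mulVec x0) i
        = ((aggL π * A * avgL π).mulVec ((aggL π).mulVec x0)) i := by
      rw [Matrix.mulVec_mulVec]
    rw [hQ]
    have hbm : ∀ i', redBound π d m i' ≤ redBound π d m i' ∧
        redBound π d m i' ≤ redBound π d M i' := fun i' =>
      ⟨le_refl _, Finset.sum_le_sum fun l _ => hmM l⟩
    have hbM : ∀ i', redBound π d m i' ≤ redBound π d M i' ∧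
        redBound π d M i' ≤ redBound π d M i' := fun i' =>
      ⟨Finset.sum_le_sum fun l _ => hmM l, le_refl _⟩
    apply le_antisymm
    · apply le_of_forall_pos_le_add
      intro ε hε
      have := (step x0 i (redBound π d m) hbm ε hε).1
      linarith
    · apply le_of_forall_pos_le_add
      intro ε hε
      have := (step x0 i (redBound π d M) hbM ε hε).2
      linarith
  ext i j
  have := main (Pi.single j 1) i
  simpa [Matrix.mulVec_single] using this
end

section
/- (Existence of the coarsest control equivalence refining a given partition; mathematical core of Theorem 3.) Let A ∈ ℝ^{N×N} and let r' be an equivalence relation on Fin N. Among all equivalence relations r on Fin N that refine r' (i.e., r-related elements are r'-related) and are control equivalences for A, there exists a greatest one: an equivalence relation r* refining r' that is a control equivalence for A and such that every control equivalence for A refining r' also refines r*. -/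
open Matrix

open Classical in
/-- An equivalence relation `r` on `Fin N` is a control equivalence for `A` if, for every
class `C` of `r` (the class of some node `c`) and all nodes `j, j'` lying in a common
class of `r`, the column sums of `A` over `C` agree. -/
noncomputable def IsCtrlEquiv {N : ℕ} (A : Matrix (Fin N) (Fin N) ℝ)
    (r : Setoid (Fin N)) : Prop :=
  ∀ j j' : Fin N, r.r j j' → ∀ c : Fin N,
    ∑ i ∈ Finset.univ.filter (fun i : Fin N => r.r i c), A i j =
      ∑ i ∈ Finset.univ.filter (fun i : Fin N => r.r i c), A i j'

open Classical in
lemma key_sum {N : ℕ} (A : Matrix (Fin N) (Fin N) ℝ) (r rstar : Setoid (Fin N))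
    (hle : r ≤ rstar)
    (hc : ∀ j j' : Fin N, r.r j j' → ∀ c : Fin N,
      ∑ i ∈ Finset.univ.filter (fun i : Fin N => r.r i c), A i j =
        ∑ i ∈ Finset.univ.filter (fun i : Fin N => r.r i c), A i j')
    (j j' : Fin N) (hjj' : r.r j j') (c : Fin N) :
    ∑ i ∈ Finset.univ.filter (fun i : Fin N => rstar.r i c), A i j =
      ∑ i ∈ Finset.univ.filter (fun i : Fin N => rstar.r i c), A i j' := by
  classical
  haveI : Fintype (Quotient r) := Fintype.ofFinite _
  set s : Finset (Fin N) := Finset.univ.filter (fun i : Fin N => rstar.r i c) with hs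
  have h1 : ∀ (f : Fin N → ℝ), ∑ i ∈ s, f i =
      ∑ q ∈ (Finset.univ : Finset (Quotient r)),
        ∑ i ∈ s.filter (fun i => Quotient.mk r i = q), f i := by
    intro f
    exact (Finset.sum_fiberwise_of_maps_to (fun x _ => Finset.mem_univ _) f).symm
  rw [h1, h1]
  refine Finset.sum_congr rfl fun q _ => ?_
  by_cases hq : (s.filter (fun i => Quotient.mk r i = q)).Nonempty
  · obtain ⟨i0, hi0⟩ := hq
    simp only [Finset.mem_filter, hs, Finset.mem_univ, true_and] at hi0
    have heq : s.filter (fun i => Quotient.mk r i = q) =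
        Finset.univ.filter (fun i : Fin N => r.r i i0) := by
      ext i
      simp only [Finset.mem_filter, hs, Finset.mem_univ, true_and]
      constructor
      · rintro ⟨_, hiq⟩
        exact Quotient.exact (hiq.trans hi0.2.symm)
      · intro hri
        exact ⟨rstar.trans (hle hri) hi0.1, (Quotient.sound hri).trans hi0.2⟩
    rw [heq]
    exact hc j j' hjj' i0
  · rw [Finset.not_nonempty_iff_eq_empty] at hq
    rw [hq]
    simp
/-- Existence of the coarsest control equivalence refining a given partition: among all
equivalence relations refining `r'` that are control equivalences for `A`, there is a
greatest one. -/
theorem exists_coarsest_controlEquivalence {N : ℕ} (A : Matrix (Fin N) (Fin N) ℝ)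
    (r' : Setoid (Fin N)) :
    ∃ rstar : Setoid (Fin N),
      (∀ a b : Fin N, rstar.r a b → r'.r a b) ∧
      IsCtrlEquiv A rstar ∧
      ∀ r : Setoid (Fin N), (∀ a b : Fin N, r.r a b → r'.r a b) →
        IsCtrlEquiv A r → ∀ a b : Fin N, r.r a b → rstar.r a b := by
  classical
  set S : Set (Setoid (Fin N)) :=
    {r | (∀ a b : Fin N, r.r a b → r'.r a b) ∧ IsCtrlEquiv A r} with hS
  refine ⟨sSup S, ?_, ?_, ?_⟩
  · intro a b hab
    have h := sSup_le (fun r hr => Setoid.le_def.mpr (fun hab => hr.1 _ _ hab) : ∀ r ∈ S, r ≤ r')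
    exact h hab
  · intro j j' hjj' c
    rw [Setoid.sSup_eq_eqvGen] at hjj'
    induction hjj' with
    | rel x y hxy =>
      obtain ⟨r, hrS, hr⟩ := hxy
      exact key_sum A r (sSup S) (le_sSup hrS) hrS.2 x y hr c
    | refl x => rfl
    | symm x y _ ih => exact ih.symm
    | trans x y z _ _ ih1 ih2 => exact ih1.trans ih2
  · intro r h1 h2 a b hab
    exact le_sSup (show r ∈ S from ⟨h1, h2⟩) hab
end
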